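/- arXiv:2311.07745 — 2 statements merged into one kernel-verified Lean document; each statement's English description precedes it below -/
import Mathlib

section
/- Let r : X × Z^n → ℝ be measurable with |r(x, z_{1:n})| ≤ R for all (x, z_{1:n}), where R ≥ 0. Then the difference between the expected terminal reward under the original and simplified observation models is bounded by R times the sum of expected stepwise discrepancies under the simplified model: |E_{p_Z}^{(n)}[r] − E_{q_Z}^{(n)}[r]| ≤ R · ∑_{l=1}^n D_l. -/
open MeasureTheory ENNReal Function

noncomputable section

/-- The state-dependent total-variation discrepancy
`Δ(x) = ∫ |p_Z(x,z) − q_Z(x,z)| dμ_Z(z)` between two conditional observation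
densities. -/
def TVdisc {X Z : Type*} [MeasurableSpace Z] (μZ : Measure Z)
    (pZ qZ : X → Z → ℝ) (x : X) : ℝ :=
  ∫ z, |pZ x z - qZ x z| ∂μZ

/-- `Eexp μX μZ b τ ρ i hi f` is the expectation
`E_ρ^{(i)}[f] = ∫_{Z^i} ∫_{X^{i+1}} b(x₀) ∏_{j=1}^i τ_j(x_{j-1}, z_{1:j-1}, x_j)
∏_{j=1}^i ρ(x_j, z_j) · f(x_i, z_{1:i})`. -/
def Eexp {X Z : Type*} [MeasurableSpace X] [MeasurableSpace Z]
    (μX : Measure X) (μZ : Measure Z) {n : ℕ}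
    (b : X → ℝ) (τ : (j : Fin n) → X → (Fin j.val → Z) → X → ℝ)
    (ρ : X → Z → ℝ) (i : ℕ) (hi : i ≤ n)
    (f : X → (Fin i → Z) → ℝ) : ℝ :=
  ∫ z : Fin i → Z,
    ∫ x : Fin (i + 1) → X,
      b (x 0) *
        (∏ j : Fin i,
          τ (j.castLE hi) (x j.castSucc) (fun k => z (k.castLE j.isLt.le))
            (x j.succ)) *
        (∏ j : Fin i, ρ (x j.succ) (z j)) *
        f (x (Fin.last i)) z
      ∂(Measure.pi fun _ => μX)
    ∂(Measure.pi fun _ => μZ)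

/-- `Dstep μX μZ b τ pZ qZ l` is the expected stepwise discrepancy
`D_{l+1} = ∫_{Z^l} ∫_{X^{l+2}} b(x₀) ∏_{j=1}^{l+1} τ_j ∏_{k=1}^{l} q_Z(x_k,z_k) ·
Δ(x_{l+1})` (the paper's `D_l` for the 1-based step `l = l.val + 1`). -/
def Dstep {X Z : Type*} [MeasurableSpace X] [MeasurableSpace Z]
    (μX : Measure X) (μZ : Measure Z) {n : ℕ}
    (b : X → ℝ) (τ : (j : Fin n) → X → (Fin j.val → Z) → X → ℝ)
    (pZ qZ : X → Z → ℝ) (l : Fin n) : ℝ :=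
  ∫ z : Fin l.val → Z,
    ∫ x : Fin (l.val + 2) → X,
      b (x 0) *
        (∏ j : Fin (l.val + 1),
          τ (j.castLE l.isLt) (x j.castSucc)
            (fun k => z (k.castLE (Nat.lt_succ_iff.mp j.isLt))) (x j.succ)) *
        (∏ k : Fin l.val, qZ (x k.succ.castSucc) (z k)) *
        TVdisc μZ pZ qZ (x (Fin.last (l.val + 1)))
      ∂(Measure.pi fun _ => μX)
    ∂(Measure.pi fun _ => μZ)


namespace Thm1Aux

lemma integrable_of_integral_eq_one {α : Type*} [MeasurableSpace α] {μ : Measure α}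
    {f : α → ℝ} (h : ∫ x, f x ∂μ = 1) : Integrable f μ := by
  by_contra hc
  rw [integral_undef hc] at h
  norm_num at h

lemma snoc_val_lt {α : Type*} {m : ℕ} (z : Fin m → α) (a : α) (i : Fin (m + 1))
    (h : i.val < m) : Fin.snoc (α := fun _ => α) z a i = z ⟨i.val, h⟩ := by
  have hi : i = Fin.castSucc ⟨i.val, h⟩ := rfl
  conv_lhs => rw [hi]
  rw [Fin.snoc_castSucc]

lemma lintegral_pi_snoc {α : Type*} [MeasurableSpace α] (μ : Measure α) [SigmaFinite μ] {m : ℕ}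
    (F : (Fin (m + 1) → α) → ℝ≥0∞) (hF : Measurable F) :
    ∫⁻ y, F y ∂(Measure.pi fun _ : Fin (m + 1) => μ) =
      ∫⁻ x : Fin m → α, ∫⁻ a, F (Fin.snoc x a) ∂μ ∂(Measure.pi fun _ : Fin m => μ) := by
  have hmp := measurePreserving_piFinSuccAbove (fun _ : Fin (m + 1) => μ) (Fin.last m)
  set e := MeasurableEquiv.piFinSuccAbove (fun _ : Fin (m + 1) => α) (Fin.last m)
  have h1 : ∫⁻ y, F y ∂(Measure.pi fun _ : Fin (m + 1) => μ)
      = ∫⁻ y, F (e.symm (e y)) ∂(Measure.pi fun _ : Fin (m + 1) => μ) := by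
    simp
  have hms : Measurable fun p : α × (Fin m → α) => F (e.symm p) :=
    hF.comp e.symm.measurable
  have h2 := hmp.lintegral_comp (f := fun p => F (e.symm p)) hms
  rw [h1, h2, lintegral_prod _ hms.aemeasurable,
    lintegral_lintegral_swap (f := fun a x => F (e.symm (a, x))) hms.aemeasurable]
  congr 1; ext x; congr 1; ext a
  congr 1
  show e.symm (a, x) = Fin.snoc x a
  rw [MeasurableEquiv.piFinSuccAbove_symm_apply]
  exact Fin.insertNth_last' a x

lemma lintegral_pi_zero {α : Type*} [MeasurableSpace α] (μ : Measure α)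
    (F : (Fin 0 → α) → ℝ≥0∞) :
    ∫⁻ y, F y ∂(Measure.pi fun _ : Fin 0 => μ) = F finZeroElim := by
  rw [Measure.pi_of_empty]
  rw [lintegral_dirac' _ (measurable_of_finite F)]
  exact congrArg F (funext fun i => i.elim0)


lemma telescope {m : ℕ} (a c : Fin m → ℝ) (ha : ∀ j, 0 ≤ a j) (hc : ∀ j, 0 ≤ c j) :
    |(∏ j, a j) - ∏ j, c j| ≤
      ∑ l : Fin m, ∏ j,
        (if j.val < l.val then c j else if j.val = l.val then |a j - c j| else a j) := by
  induction m with
  | zero => simp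
  | succ m IH =>
    rw [Fin.prod_univ_castSucc (f := a), Fin.prod_univ_castSucc (f := c),
      Fin.sum_univ_castSucc]
    set A := ∏ j : Fin m, a j.castSucc with hA
    set C := ∏ j : Fin m, c j.castSucc with hC
    have hA0 : 0 ≤ A := Finset.prod_nonneg fun j _ => ha _
    have hC0 : 0 ≤ C := Finset.prod_nonneg fun j _ => hc _
    have key : |A * a (Fin.last m) - C * c (Fin.last m)| ≤
        |A - C| * a (Fin.last m) + C * |a (Fin.last m) - c (Fin.last m)| := by
      have : A * a (Fin.last m) - C * c (Fin.last m)
          = (A - C) * a (Fin.last m) + C * (a (Fin.last m) - c (Fin.last m)) := by ring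
      rw [this]
      refine (abs_add_le _ _).trans ?_
      rw [abs_mul, abs_mul, abs_of_nonneg (ha _), abs_of_nonneg hC0]
    refine key.trans ?_
    have hlast : ∏ j : Fin (m+1),
        (if j.val < (Fin.last m).val then c j else
          if j.val = (Fin.last m).val then |a j - c j| else a j)
        = C * |a (Fin.last m) - c (Fin.last m)| := by
      rw [Fin.prod_univ_castSucc]
      have h1 : ∀ j : Fin m,
          (if (j.castSucc : Fin (m+1)).val < (Fin.last m).val then c j.castSucc else
            if (j.castSucc : Fin (m+1)).val = (Fin.last m).val then
              |a j.castSucc - c j.castSucc| else a j.castSucc) = c j.castSucc := by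
        intro j; rw [if_pos]; exact j.isLt
      rw [Finset.prod_congr rfl (fun j _ => h1 j), if_neg (lt_irrefl _), if_pos rfl]
    have hcast : ∀ l : Fin m, ∏ j : Fin (m+1),
        (if j.val < (l.castSucc).val then c j else
          if j.val = (l.castSucc).val then |a j - c j| else a j)
        = (∏ j : Fin m, (if j.val < l.val then c j.castSucc else
            if j.val = l.val then |a j.castSucc - c j.castSucc| else a j.castSucc))
            * a (Fin.last m) := by
      intro l
      rw [Fin.prod_univ_castSucc]
      congr 1
      have hl := l.isLt
      have h1 : ¬ ((Fin.last m).val < (l.castSucc).val) := by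
        simp only [Fin.val_last, Fin.coe_castSucc]; omega
      have h2 : ¬ ((Fin.last m).val = (l.castSucc).val) := by
        simp only [Fin.val_last, Fin.coe_castSucc]; omega
      rw [if_neg h1, if_neg h2]
    rw [hlast]
    have := IH (fun j => a j.castSucc) (fun j => c j.castSucc) (fun j => ha _) (fun j => hc _)
    calc |A - C| * a (Fin.last m) + C * |a (Fin.last m) - c (Fin.last m)|
        ≤ (∑ l : Fin m, ∏ j : Fin m, (if j.val < l.val then c j.castSucc else
            if j.val = l.val then |a j.castSucc - c j.castSucc| else a j.castSucc))
            * a (Fin.last m) + C * |a (Fin.last m) - c (Fin.last m)| := by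
          refine add_le_add (mul_le_mul_of_nonneg_right ?_ (ha _)) le_rfl
          simpa using this
      _ = (∑ l : Fin m, ∏ j : Fin (m+1),
          (if j.val < (l.castSucc).val then c j else
            if j.val = (l.castSucc).val then |a j - c j| else a j))
          + C * |a (Fin.last m) - c (Fin.last m)| := by
          rw [Finset.sum_mul]
          congr 1
          exact Finset.sum_congr rfl fun l _ => (hcast l).symm

lemma integrable_of_nonneg_lintegral_ne_top {α : Type*} [MeasurableSpace α] {μ : Measure α}
    {f : α → ℝ} (hf : Measurable f) (h0 : ∀ x, 0 ≤ f x)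
    (hfin : ∫⁻ x, ENNReal.ofReal (f x) ∂μ ≠ ∞) : Integrable f μ := by
  refine ⟨hf.aestronglyMeasurable, ?_⟩
  rw [hasFiniteIntegral_iff_norm]
  have : ∀ x, ENNReal.ofReal ‖f x‖ = ENNReal.ofReal (f x) := by
    intro x; rw [Real.norm_eq_abs, abs_of_nonneg (h0 x)]
  simpa only [this] using hfin.lt_top

lemma lintegral_ofReal_density {α : Type*} [MeasurableSpace α] {μ : Measure α}
    {f : α → ℝ} (hf : Measurable f) (h0 : ∀ x, 0 ≤ f x) (hnorm : ∫ x, f x ∂μ = 1) :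
    ∫⁻ x, ENNReal.ofReal (f x) ∂μ = 1 := by
  have hint : Integrable f μ := by
    by_contra h
    rw [integral_undef h] at hnorm
    norm_num at hnorm
  rw [← ofReal_integral_eq_lintegral_ofReal hint (Filter.Eventually.of_forall h0), hnorm,
    ENNReal.ofReal_one]

lemma integral_integral_eq_toReal {α β : Type*} [MeasurableSpace α] [MeasurableSpace β]
    (μ : Measure α) (ν : Measure β) [SFinite ν] (f : α → β → ℝ)
    (hf : Measurable (uncurry f)) (h0 : ∀ a b, 0 ≤ f a b)
    (hfin : ∫⁻ a, ∫⁻ b, ENNReal.ofReal (f a b) ∂ν ∂μ ≠ ∞) :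
    ∫ a, ∫ b, f a b ∂ν ∂μ = (∫⁻ a, ∫⁻ b, ENNReal.ofReal (f a b) ∂ν ∂μ).toReal := by
  have hg : Measurable fun a => ∫⁻ b, ENNReal.ofReal (f a b) ∂ν :=
    Measurable.lintegral_prod_right' (f := fun p => ENNReal.ofReal (uncurry f p))
      (measurable_ofReal.comp hf)
  have hin : ∀ a, ∫ b, f a b ∂ν = (∫⁻ b, ENNReal.ofReal (f a b) ∂ν).toReal := by
    intro a
    exact integral_eq_lintegral_of_nonneg_ae (Filter.Eventually.of_forall (h0 a))
      (hf.comp measurable_prodMk_left).aestronglyMeasurable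
  simp only [hin]
  rw [integral_eq_lintegral_of_nonneg_ae
    (Filter.Eventually.of_forall fun a => ENNReal.toReal_nonneg)
    hg.ennreal_toReal.aestronglyMeasurable]
  congr 1
  have hae : ∀ᵐ a ∂μ, (∫⁻ b, ENNReal.ofReal (f a b) ∂ν) ≠ ∞ :=
    ae_lt_top hg hfin |>.mono fun a h => h.ne
  refine lintegral_congr_ae (hae.mono fun a h => ?_)
  dsimp only
  rw [ENNReal.ofReal_toReal h]


section Main

variable {X Z : Type*} [MeasurableSpace X] [MeasurableSpace Z]
  {n : ℕ}

/-- Joint density-times-weights integrand. -/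
def W (b : X → ℝ) (τ : (j : Fin n) → X → (Fin j.val → Z) → X → ℝ)
    (w : ℕ → X → Z → ℝ) (m : ℕ) (hm : m ≤ n)
    (z : Fin m → Z) (x : Fin (m + 1) → X) : ℝ :=
  b (x 0) *
    (∏ j : Fin m,
      τ (j.castLE hm) (x j.castSucc) (fun k => z (k.castLE j.isLt.le)) (x j.succ)) *
    ∏ j : Fin m, w j.val (x j.succ) (z j)

lemma W_snoc (b : X → ℝ) (τ : (j : Fin n) → X → (Fin j.val → Z) → X → ℝ)
    (w : ℕ → X → Z → ℝ) (m : ℕ) (hm : m + 1 ≤ n) (z : Fin m → Z) (zl : Z)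
    (x : Fin (m + 1) → X) (xl : X) :
    W b τ w (m + 1) hm (Fin.snoc z zl) (Fin.snoc x xl) =
      W b τ w m (Nat.le_of_succ_le hm) z x *
        τ ⟨m, hm⟩ (x (Fin.last m)) (fun k => z (k.castLE (le_refl m))) xl * w m xl zl := by
  unfold W
  rw [Fin.prod_univ_castSucc, Fin.prod_univ_castSucc]
  have hb0 : (Fin.snoc (α := fun _ => X) x xl) (0 : Fin (m+2)) = x 0 := by
    rw [snoc_val_lt x xl 0 (Nat.succ_pos m)]
    exact congrArg x (Fin.ext (by simp))
  have hτpre : (∏ j : Fin m,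
      τ ((j.castSucc).castLE hm) (Fin.snoc (α := fun _ => X) x xl (j.castSucc).castSucc)
        (fun k => Fin.snoc (α := fun _ => Z) z zl (k.castLE (j.castSucc).isLt.le)) (Fin.snoc (α := fun _ => X) x xl (j.castSucc).succ))
      = ∏ j : Fin m,
        τ (j.castLE (Nat.le_of_succ_le hm)) (x j.castSucc)
          (fun k => z (k.castLE j.isLt.le)) (x j.succ) := by
    refine Finset.prod_congr rfl fun j _ => ?_
    have hj := j.isLt
    rw [snoc_val_lt x xl (j.castSucc).castSucc
        (by simp only [Fin.coe_castSucc]; omega),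
      snoc_val_lt x xl (j.castSucc).succ
        (by simp only [Fin.val_succ, Fin.coe_castSucc]; omega)]
    exact congrArg
      (fun h : Fin j.val → Z =>
        τ (j.castLE (Nat.le_of_succ_le hm)) (x j.castSucc) h (x j.succ))
      (funext fun k => snoc_val_lt z zl
        (k.castLE (by have hj := j.isLt; simp only [Fin.coe_castLE, Fin.coe_castSucc]; omega))
        (by have hk := k.isLt; have hj := j.isLt;
            simp only [Fin.coe_castLE, Fin.coe_castSucc] at hk ⊢; omega))
  have hτlast :
      τ (((Fin.last m)).castLE hm) (Fin.snoc (α := fun _ => X) x xl (Fin.last m).castSucc)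
        (fun k => Fin.snoc (α := fun _ => Z) z zl (k.castLE (Fin.last m).isLt.le)) (Fin.snoc (α := fun _ => X) x xl (Fin.last m).succ)
      = τ ⟨m, hm⟩ (x (Fin.last m)) (fun k => z (k.castLE (le_refl m))) xl := by
    rw [snoc_val_lt x xl (Fin.last m).castSucc (by simp),
      Fin.succ_last, Fin.snoc_last]
    exact congrArg
      (fun h : Fin m → Z => τ ⟨m, hm⟩ (x (Fin.last m)) h xl)
      (funext fun k => snoc_val_lt z zl
        (k.castLE (by simp only [Fin.coe_castLE, Fin.val_last]; omega))
        (by have hk := k.isLt; simp only [Fin.coe_castLE, Fin.val_last] at hk ⊢; omega))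
  have hwpre : (∏ j : Fin m,
      w (j.castSucc).val (Fin.snoc (α := fun _ => X) x xl (j.castSucc).succ) (Fin.snoc (α := fun _ => Z) z zl j.castSucc))
      = ∏ j : Fin m, w j.val (x j.succ) (z j) := by
    refine Finset.prod_congr rfl fun j _ => ?_
    have hj := j.isLt
    rw [snoc_val_lt x xl (j.castSucc).succ
        (by simp only [Fin.val_succ, Fin.coe_castSucc]; omega),
      Fin.snoc_castSucc]
    rfl
  have hwlast : w ((Fin.last m)).val (Fin.snoc (α := fun _ => X) x xl (Fin.last m).succ) (Fin.snoc (α := fun _ => Z) z zl (Fin.last m))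
      = w m xl zl := by
    rw [Fin.succ_last, Fin.snoc_last, Fin.snoc_last]
    rfl
  rw [hb0, hτpre, hτlast, hwpre, hwlast]
  ring

lemma measurable_snoc {α : Type*} [MeasurableSpace α] {m : ℕ} :
    Measurable fun q : (Fin m → α) × α => (Fin.snoc q.1 q.2 : Fin (m + 1) → α) := by
  refine measurable_pi_lambda _ fun i => ?_
  induction i using Fin.lastCases with
  | last => simpa only [Fin.snoc_last] using measurable_snd
  | cast j => simp only [Fin.snoc_castSucc]; exact (measurable_pi_apply j).comp measurable_fst

variable {b : X → ℝ} {τ : (j : Fin n) → X → (Fin j.val → Z) → X → ℝ} {w : ℕ → X → Z → ℝ}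

lemma W_nonneg (hb0 : ∀ x, 0 ≤ b x) (hτ0 : ∀ j x h x', 0 ≤ τ j x h x')
    (hw0 : ∀ j x z, 0 ≤ w j x z) (m : ℕ) (hm : m ≤ n) (z : Fin m → Z) (x : Fin (m + 1) → X) :
    0 ≤ W b τ w m hm z x :=
  mul_nonneg (mul_nonneg (hb0 _) (Finset.prod_nonneg fun j _ => hτ0 _ _ _ _))
    (Finset.prod_nonneg fun j _ => hw0 _ _ _)

lemma measurable_W (hb : Measurable b)
    (hτ : ∀ j, Measurable fun t : X × (Fin j.val → Z) × X => τ j t.1 t.2.1 t.2.2)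
    (hw : ∀ j, Measurable (Function.uncurry (w j))) (m : ℕ) (hm : m ≤ n) :
    Measurable fun y : (Fin m → Z) × (Fin (m + 1) → X) => W b τ w m hm y.1 y.2 := by
  refine Measurable.mul (Measurable.mul ?_ ?_) ?_
  · exact hb.comp ((measurable_pi_apply 0).comp measurable_snd)
  · refine Finset.measurable_prod _ fun j _ => ?_
    have hmap : Measurable fun y : (Fin m → Z) × (Fin (m + 1) → X) =>
        ((y.2 j.castSucc, (fun k : Fin (j.castLE hm).val => y.1 (k.castLE j.isLt.le),
          y.2 j.succ)) : X × (Fin (j.castLE hm).val → Z) × X) := by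
      refine Measurable.prodMk ((measurable_pi_apply _).comp measurable_snd)
        (Measurable.prodMk ?_ ((measurable_pi_apply _).comp measurable_snd))
      exact measurable_pi_lambda _ fun k => (measurable_pi_apply _).comp measurable_fst
    exact (hτ (j.castLE hm)).comp hmap
  · refine Finset.measurable_prod _ fun j _ => ?_
    have h1 : Measurable fun y : (Fin m → Z) × (Fin (m + 1) → X) => (y.2 j.succ, y.1 j) :=
      ((measurable_pi_apply _).comp measurable_snd).prodMk
        ((measurable_pi_apply _).comp measurable_fst)
    exact (hw j.val).comp h1

variable (μX : Measure X) (μZ : Measure Z) [SigmaFinite μX] [SigmaFinite μZ]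

lemma W_step (hb : Measurable b) (hb0 : ∀ x, 0 ≤ b x)
    (hτ : ∀ j, Measurable fun t : X × (Fin j.val → Z) × X => τ j t.1 t.2.1 t.2.2)
    (hτ0 : ∀ j x h x', 0 ≤ τ j x h x')
    (hτn : ∀ j x h, ∫ x', τ j x h x' ∂μX = 1)
    (hw : ∀ j, Measurable (Function.uncurry (w j))) (hw0 : ∀ j x z, 0 ≤ w j x z)
    (m : ℕ) (hm : m + 1 ≤ n) (hwn : ∀ x', ∫ zl, w m x' zl ∂μZ = 1) :
    ∫⁻ z, ∫⁻ x, ENNReal.ofReal (W b τ w (m + 1) hm z x)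
        ∂(Measure.pi fun _ : Fin (m + 2) => μX) ∂(Measure.pi fun _ : Fin (m + 1) => μZ) =
      ∫⁻ z, ∫⁻ x, ENNReal.ofReal (W b τ w m (Nat.le_of_succ_le hm) z x)
        ∂(Measure.pi fun _ : Fin (m + 1) => μX) ∂(Measure.pi fun _ : Fin m => μZ) := by
  have hWm1 : Measurable fun y : (Fin (m + 1) → Z) × (Fin (m + 2) → X) =>
      ENNReal.ofReal (W b τ w (m + 1) hm y.1 y.2) :=
    ENNReal.measurable_ofReal.comp (measurable_W hb hτ hw (m + 1) hm)
  have hWm : Measurable fun y : (Fin m → Z) × (Fin (m + 1) → X) =>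
      ENNReal.ofReal (W b τ w m (Nat.le_of_succ_le hm) y.1 y.2) :=
    ENNReal.measurable_ofReal.comp (measurable_W hb hτ hw m (Nat.le_of_succ_le hm))
  -- peel the last X coordinate inside
  have step1 : ∀ z : Fin (m + 1) → Z,
      ∫⁻ x, ENNReal.ofReal (W b τ w (m + 1) hm z x) ∂(Measure.pi fun _ : Fin (m + 2) => μX)
      = ∫⁻ x : Fin (m + 1) → X, ∫⁻ xl, ENNReal.ofReal (W b τ w (m + 1) hm z (Fin.snoc x xl))
          ∂μX ∂(Measure.pi fun _ : Fin (m + 1) => μX) := by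
    intro z
    exact lintegral_pi_snoc μX _ (hWm1.comp measurable_prodMk_left)
  rw [lintegral_congr step1]
  -- peel the last Z coordinate
  have hsnocform : Measurable fun p : (Fin (m + 1) → Z) × (Fin (m + 1) → X) × X =>
      ENNReal.ofReal (W b τ w (m + 1) hm p.1 (Fin.snoc p.2.1 p.2.2)) :=
    hWm1.comp (measurable_fst.prodMk (measurable_snoc.comp measurable_snd))
  have hG : Measurable fun z : Fin (m + 1) → Z =>
      ∫⁻ x : Fin (m + 1) → X, ∫⁻ xl, ENNReal.ofReal (W b τ w (m + 1) hm z (Fin.snoc x xl))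
        ∂μX ∂(Measure.pi fun _ : Fin (m + 1) => μX) := by
    refine Measurable.lintegral_prod_right' (f := fun p : (Fin (m+1) → Z) × (Fin (m+1) → X) =>
      ∫⁻ xl, ENNReal.ofReal (W b τ w (m + 1) hm p.1 (Fin.snoc p.2 xl)) ∂μX) ?_
    exact Measurable.lintegral_prod_right' (f := fun q : ((Fin (m+1) → Z) × (Fin (m+1) → X)) × X
      => ENNReal.ofReal (W b τ w (m + 1) hm q.1.1 (Fin.snoc q.1.2 q.2)))
      (hsnocform.comp ((measurable_fst.comp measurable_fst).prodMk
        ((measurable_snd.comp measurable_fst).prodMk measurable_snd)))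
  rw [lintegral_pi_snoc μZ _ hG]
  refine lintegral_congr fun z => ?_
  -- now fixed z : Fin m → Z
  have hswap1 : ∫⁻ zl, ∫⁻ x : Fin (m + 1) → X, ∫⁻ xl,
      ENNReal.ofReal (W b τ w (m + 1) hm (Fin.snoc z zl) (Fin.snoc x xl)) ∂μX
        ∂(Measure.pi fun _ : Fin (m + 1) => μX) ∂μZ
      = ∫⁻ x : Fin (m + 1) → X, ∫⁻ zl, ∫⁻ xl,
        ENNReal.ofReal (W b τ w (m + 1) hm (Fin.snoc z zl) (Fin.snoc x xl)) ∂μX ∂μZ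
          ∂(Measure.pi fun _ : Fin (m + 1) => μX) := by
    refine lintegral_lintegral_swap ?_
    refine (Measurable.lintegral_prod_right' (f := fun q : (Z × (Fin (m+1) → X)) × X =>
      ENNReal.ofReal (W b τ w (m + 1) hm (Fin.snoc z q.1.1) (Fin.snoc q.1.2 q.2)))
      ?_).aemeasurable
    refine hWm1.comp (Measurable.prodMk ?_ ?_)
    · exact measurable_snoc.comp (measurable_const.prodMk
        (measurable_fst.comp measurable_fst))
    · exact measurable_snoc.comp ((measurable_snd.comp measurable_fst).prodMk measurable_snd)
  rw [hswap1]
  have hswap2 : ∀ x : Fin (m + 1) → X,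
      ∫⁻ zl, ∫⁻ xl, ENNReal.ofReal (W b τ w (m + 1) hm (Fin.snoc z zl) (Fin.snoc x xl)) ∂μX ∂μZ
      = ∫⁻ xl, ∫⁻ zl, ENNReal.ofReal (W b τ w (m + 1) hm (Fin.snoc z zl) (Fin.snoc x xl)) ∂μZ
          ∂μX := by
    intro x
    refine lintegral_lintegral_swap ?_
    refine (hWm1.comp (Measurable.prodMk ?_ ?_)).aemeasurable
    · exact measurable_snoc.comp (measurable_const.prodMk measurable_fst)
    · exact measurable_snoc.comp (measurable_const.prodMk measurable_snd)
  rw [lintegral_congr hswap2]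
  have hinner : ∀ (x : Fin (m + 1) → X) (xl : X),
      ∫⁻ zl, ENNReal.ofReal (W b τ w (m + 1) hm (Fin.snoc z zl) (Fin.snoc x xl)) ∂μZ
      = ENNReal.ofReal (W b τ w m (Nat.le_of_succ_le hm) z x) *
          ENNReal.ofReal (τ ⟨m, hm⟩ (x (Fin.last m)) (fun k => z (k.castLE (le_refl m))) xl) := by
    intro x xl
    have hrw : ∀ zl, ENNReal.ofReal (W b τ w (m + 1) hm (Fin.snoc z zl) (Fin.snoc x xl))
        = ENNReal.ofReal (W b τ w m (Nat.le_of_succ_le hm) z x) *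
            ENNReal.ofReal (τ ⟨m, hm⟩ (x (Fin.last m)) (fun k => z (k.castLE (le_refl m))) xl) *
            ENNReal.ofReal (w m xl zl) := by
      intro zl
      rw [W_snoc, ENNReal.ofReal_mul, ENNReal.ofReal_mul]
      · exact W_nonneg hb0 hτ0 hw0 _ _ _ _
      · exact mul_nonneg (W_nonneg hb0 hτ0 hw0 _ _ _ _) (hτ0 _ _ _ _)
    simp only [hrw]
    rw [lintegral_const_mul' _ _ (ENNReal.mul_ne_top ENNReal.ofReal_ne_top
      ENNReal.ofReal_ne_top)]
    have hfm : Measurable fun zl => w m xl zl := (hw m).comp measurable_prodMk_left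
    rw [lintegral_ofReal_density hfm (fun zl => hw0 m xl zl) (hwn xl), mul_one]
  simp only [hinner]
  have houter : ∀ x : Fin (m + 1) → X,
      ∫⁻ xl, ENNReal.ofReal (W b τ w m (Nat.le_of_succ_le hm) z x) *
          ENNReal.ofReal (τ ⟨m, hm⟩ (x (Fin.last m)) (fun k => z (k.castLE (le_refl m))) xl) ∂μX
      = ENNReal.ofReal (W b τ w m (Nat.le_of_succ_le hm) z x) := by
    intro x
    rw [lintegral_const_mul' _ _ ENNReal.ofReal_ne_top]
    have h2 : Measurable fun xl : X =>
        ((x (Fin.last m), ((fun k => z (k.castLE (le_refl m))), xl)) :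
          X × (Fin ((⟨m, hm⟩ : Fin n)).val → Z) × X) :=
      measurable_const.prodMk (measurable_const.prodMk measurable_id)
    have hτm : Measurable fun xl : X =>
        τ ⟨m, hm⟩ (x (Fin.last m)) (fun k => z (k.castLE (le_refl m))) xl :=
      (hτ ⟨m, hm⟩).comp h2
    rw [lintegral_ofReal_density hτm (fun xl => hτ0 _ _ _ _) (hτn ⟨m, hm⟩ _ _), mul_one]
  simp only [houter]

lemma W_mass (hb : Measurable b) (hb0 : ∀ x, 0 ≤ b x) (hbn : ∫ x, b x ∂μX = 1)
    (hτ : ∀ j, Measurable fun t : X × (Fin j.val → Z) × X => τ j t.1 t.2.1 t.2.2)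
    (hτ0 : ∀ j x h x', 0 ≤ τ j x h x')
    (hτn : ∀ j x h, ∫ x', τ j x h x' ∂μX = 1)
    (hw : ∀ j, Measurable (Function.uncurry (w j))) (hw0 : ∀ j x z, 0 ≤ w j x z)
    (hwn : ∀ j x', ∫ z, w j x' z ∂μZ = 1) (m : ℕ) :
    ∀ hm : m ≤ n,
      ∫⁻ z, ∫⁻ x, ENNReal.ofReal (W b τ w m hm z x)
        ∂(Measure.pi fun _ : Fin (m + 1) => μX) ∂(Measure.pi fun _ : Fin m => μZ) = 1 := by
  induction m with
  | zero =>
    intro hm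
    rw [lintegral_pi_zero]
    have hFm : Measurable fun x : Fin (0 + 1) → X =>
        ENNReal.ofReal (W b τ w 0 hm finZeroElim x) :=
      ENNReal.measurable_ofReal.comp ((measurable_W hb hτ hw 0 hm).comp
        ((measurable_const (a := (finZeroElim : Fin 0 → Z))).prodMk measurable_id))
    rw [lintegral_pi_snoc μX _ hFm]
    rw [lintegral_pi_zero]
    have hW0 : ∀ xl : X,
        W b τ w 0 hm finZeroElim (Fin.snoc finZeroElim xl) = b xl := by
      intro xl
      have h0 : (Fin.snoc (α := fun _ => X) finZeroElim xl) 0 = xl := Fin.snoc_last _ _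
      simp [W, h0]
    simp only [hW0]
    exact lintegral_ofReal_density hb hb0 hbn
  | succ m IH =>
    intro hm
    rw [W_step μX μZ hb hb0 hτ hτ0 hτn hw hw0 m hm (hwn m)]
    exact IH (Nat.le_of_succ_le hm)

variable {pZ qZ : X → Z → ℝ}

/-- Mixed per-step weights: `q` before step `l`, `|p - q|` at step `l`, `p` after. -/
def mix (pZ qZ : X → Z → ℝ) (l j : ℕ) : X → Z → ℝ :=
  if j < l then qZ else if j = l then fun x z => |pZ x z - qZ x z| else pZ

lemma mix_lt {l j : ℕ} (h : j < l) : mix pZ qZ l j = qZ := if_pos h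

lemma mix_eq (l : ℕ) : mix pZ qZ l l = fun x z => |pZ x z - qZ x z| := by
  unfold mix; rw [if_neg (lt_irrefl l), if_pos rfl]

lemma mix_gt {l j : ℕ} (h : l < j) : mix pZ qZ l j = pZ := by
  unfold mix; rw [if_neg (by omega), if_neg (by omega)]

lemma measurable_mix (hp : Measurable (Function.uncurry pZ))
    (hq : Measurable (Function.uncurry qZ)) (l j : ℕ) :
    Measurable (Function.uncurry (mix pZ qZ l j)) := by
  unfold mix
  split_ifs
  · exact hq
  · exact (hp.sub hq).abs
  · exact hp

lemma mix_nonneg (hp : ∀ x z, 0 ≤ pZ x z) (hq : ∀ x z, 0 ≤ qZ x z) (l j : ℕ) (x : X) (z : Z) :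
    0 ≤ mix pZ qZ l j x z := by
  unfold mix; split_ifs
  · exact hq x z
  · exact abs_nonneg _
  · exact hp x z

/-- The integrand of `Dstep`, with the prefix part separated from the discrepancy factor. -/
def Bpre (b : X → ℝ) (τ : (j : Fin n) → X → (Fin j.val → Z) → X → ℝ)
    (qZ : X → Z → ℝ) (m : ℕ) (hm : m + 1 ≤ n) (z : Fin m → Z) (x : Fin (m + 2) → X) : ℝ :=
  b (x 0) *
    (∏ j : Fin (m + 1),
      τ (j.castLE hm) (x j.castSucc)
        (fun k => z (k.castLE (Nat.lt_succ_iff.mp j.isLt))) (x j.succ)) *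
    ∏ k : Fin m, qZ (x k.succ.castSucc) (z k)

lemma Bpre_nonneg (hb0 : ∀ x, 0 ≤ b x) (hτ0 : ∀ j x h x', 0 ≤ τ j x h x')
    (hq0 : ∀ x z, 0 ≤ qZ x z) (m : ℕ) (hm : m + 1 ≤ n) (z : Fin m → Z) (x : Fin (m + 2) → X) :
    0 ≤ Bpre b τ qZ m hm z x :=
  mul_nonneg (mul_nonneg (hb0 _) (Finset.prod_nonneg fun j _ => hτ0 _ _ _ _))
    (Finset.prod_nonneg fun j _ => hq0 _ _)

lemma measurable_Bpre (hb : Measurable b)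
    (hτ : ∀ j, Measurable fun t : X × (Fin j.val → Z) × X => τ j t.1 t.2.1 t.2.2)
    (hq : Measurable (Function.uncurry qZ)) (m : ℕ) (hm : m + 1 ≤ n) :
    Measurable fun y : (Fin m → Z) × (Fin (m + 2) → X) => Bpre b τ qZ m hm y.1 y.2 := by
  refine Measurable.mul (Measurable.mul ?_ ?_) ?_
  · exact hb.comp ((measurable_pi_apply 0).comp measurable_snd)
  · refine Finset.measurable_prod _ fun j _ => ?_
    have hmap : Measurable fun y : (Fin m → Z) × (Fin (m + 2) → X) =>
        ((y.2 j.castSucc, (fun k : Fin (j.castLE hm).val =>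
            y.1 (k.castLE (Nat.lt_succ_iff.mp j.isLt)), y.2 j.succ)) :
          X × (Fin (j.castLE hm).val → Z) × X) := by
      refine Measurable.prodMk ((measurable_pi_apply _).comp measurable_snd)
        (Measurable.prodMk ?_ ((measurable_pi_apply _).comp measurable_snd))
      exact measurable_pi_lambda _ fun k => (measurable_pi_apply _).comp measurable_fst
    exact (hτ (j.castLE hm)).comp hmap
  · refine Finset.measurable_prod _ fun k _ => ?_
    have h1 : Measurable fun y : (Fin m → Z) × (Fin (m + 2) → X) =>
        (y.2 k.succ.castSucc, y.1 k) :=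
      ((measurable_pi_apply _).comp measurable_snd).prodMk
        ((measurable_pi_apply _).comp measurable_fst)
    exact hq.comp h1

lemma W_snoc_z (m : ℕ) (hm : m + 1 ≤ n) (z : Fin m → Z) (zl : Z) (x : Fin (m + 2) → X) :
    W b τ (mix pZ qZ m) (m + 1) hm (Fin.snoc z zl) x =
      Bpre b τ qZ m hm z x *
        |pZ (x (Fin.last (m + 1))) zl - qZ (x (Fin.last (m + 1))) zl| := by
  unfold W Bpre
  have hτprod : (∏ j : Fin (m + 1),
      τ (j.castLE hm) (x j.castSucc)
        (fun k => Fin.snoc (α := fun _ => Z) z zl (k.castLE j.isLt.le)) (x j.succ))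
      = ∏ j : Fin (m + 1),
        τ (j.castLE hm) (x j.castSucc)
          (fun k => z (k.castLE (Nat.lt_succ_iff.mp j.isLt))) (x j.succ) := by
    refine Finset.prod_congr rfl fun j _ => ?_
    exact congrArg (fun h : Fin (j.castLE hm).val → Z => τ (j.castLE hm) (x j.castSucc) h
      (x j.succ))
      (funext fun k => snoc_val_lt z zl
        (k.castLE (by simp only [Fin.coe_castLE]; omega))
        (by have hk := k.isLt; have hj := j.isLt;
            simp only [Fin.coe_castLE] at hk ⊢; omega))
  have hwprod : (∏ j : Fin (m + 1),
      mix pZ qZ m j.val (x j.succ) (Fin.snoc (α := fun _ => Z) z zl j))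
      = (∏ k : Fin m, qZ (x k.succ.castSucc) (z k)) *
        |pZ (x (Fin.last (m + 1))) zl - qZ (x (Fin.last (m + 1))) zl| := by
    rw [Fin.prod_univ_castSucc]
    congr 1
    · refine Finset.prod_congr rfl fun j _ => ?_
      rw [Fin.snoc_castSucc]
      have hml : mix pZ qZ m (j.castSucc).val = qZ := mix_lt (by
        simp only [Fin.coe_castSucc]; exact j.isLt)
      rw [hml]
      rfl
    · have hml : mix pZ qZ m ((Fin.last m)).val = fun x z => |pZ x z - qZ x z| := by
        rw [show ((Fin.last m)).val = m from rfl, mix_eq]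
      rw [hml, Fin.snoc_last, Fin.succ_last]
  rw [hτprod, hwprod]
  ring

lemma collapse_last (hb : Measurable b)
    (hτ : ∀ j, Measurable fun t : X × (Fin j.val → Z) × X => τ j t.1 t.2.1 t.2.2)
    (hb0 : ∀ x, 0 ≤ b x) (hτ0 : ∀ j x h x', 0 ≤ τ j x h x')
    (hp : Measurable (Function.uncurry pZ)) (hq : Measurable (Function.uncurry qZ))
    (hp0 : ∀ x z, 0 ≤ pZ x z) (hq0 : ∀ x z, 0 ≤ qZ x z)
    (hpn : ∀ x, ∫ z, pZ x z ∂μZ = 1) (hqn : ∀ x, ∫ z, qZ x z ∂μZ = 1)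
    (m : ℕ) (hm : m + 1 ≤ n) :
    ∫⁻ z, ∫⁻ x, ENNReal.ofReal (W b τ (mix pZ qZ m) (m + 1) hm z x)
        ∂(Measure.pi fun _ : Fin (m + 2) => μX) ∂(Measure.pi fun _ : Fin (m + 1) => μZ) =
      ∫⁻ z, ∫⁻ x, ENNReal.ofReal
          (Bpre b τ qZ m hm z x * TVdisc μZ pZ qZ (x (Fin.last (m + 1))))
        ∂(Measure.pi fun _ : Fin (m + 2) => μX) ∂(Measure.pi fun _ : Fin m => μZ) := by
  have hWmeas : Measurable fun y : (Fin (m + 1) → Z) × (Fin (m + 2) → X) =>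
      ENNReal.ofReal (W b τ (mix pZ qZ m) (m + 1) hm y.1 y.2) :=
    ENNReal.measurable_ofReal.comp
      (measurable_W hb hτ (measurable_mix hp hq m) (m + 1) hm)
  have hG : Measurable fun z : Fin (m + 1) → Z =>
      ∫⁻ x, ENNReal.ofReal (W b τ (mix pZ qZ m) (m + 1) hm z x)
        ∂(Measure.pi fun _ : Fin (m + 2) => μX) :=
    Measurable.lintegral_prod_right' hWmeas
  rw [lintegral_pi_snoc μZ _ hG]
  refine lintegral_congr fun z => ?_
  have hswap : ∫⁻ zl, ∫⁻ x, ENNReal.ofReal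
        (W b τ (mix pZ qZ m) (m + 1) hm (Fin.snoc z zl) x)
        ∂(Measure.pi fun _ : Fin (m + 2) => μX) ∂μZ
      = ∫⁻ x, ∫⁻ zl, ENNReal.ofReal
          (W b τ (mix pZ qZ m) (m + 1) hm (Fin.snoc z zl) x) ∂μZ
          ∂(Measure.pi fun _ : Fin (m + 2) => μX) := by
    refine lintegral_lintegral_swap ?_
    refine (hWmeas.comp (Measurable.prodMk ?_ measurable_snd)).aemeasurable
    exact measurable_snoc.comp (measurable_const.prodMk measurable_fst)
  rw [hswap]
  refine lintegral_congr fun x => ?_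
  have hrw : ∀ zl, ENNReal.ofReal (W b τ (mix pZ qZ m) (m + 1) hm (Fin.snoc z zl) x)
      = ENNReal.ofReal (Bpre b τ qZ m hm z x) *
          ENNReal.ofReal (|pZ (x (Fin.last (m + 1))) zl - qZ (x (Fin.last (m + 1))) zl|) := by
    intro zl
    rw [W_snoc_z, ENNReal.ofReal_mul (Bpre_nonneg hb0 hτ0 hq0 m hm z x)]
  simp only [hrw]
  rw [lintegral_const_mul' _ _ ENNReal.ofReal_ne_top]
  have hint : Integrable (fun zl => |pZ (x (Fin.last (m + 1))) zl -
      qZ (x (Fin.last (m + 1))) zl|) μZ :=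
    ((integrable_of_integral_eq_one (hpn _)).sub
      (integrable_of_integral_eq_one (hqn _))).abs
  have hof : ∫⁻ zl, ENNReal.ofReal
        |pZ (x (Fin.last (m + 1))) zl - qZ (x (Fin.last (m + 1))) zl| ∂μZ
      = ENNReal.ofReal (TVdisc μZ pZ qZ (x (Fin.last (m + 1)))) := by
    rw [← ofReal_integral_eq_lintegral_ofReal hint
      (Filter.Eventually.of_forall fun zl => abs_nonneg _)]
    rfl
  rw [hof, ← ENNReal.ofReal_mul (Bpre_nonneg hb0 hτ0 hq0 m hm z x)]

def wone (pZ qZ : X → Z → ℝ) (l j : ℕ) : X → Z → ℝ := if j < l then qZ else pZ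

def wtwo (pZ qZ : X → Z → ℝ) (l j : ℕ) : X → Z → ℝ := if j ≤ l then qZ else pZ

lemma measurable_wone (hp : Measurable (Function.uncurry pZ))
    (hq : Measurable (Function.uncurry qZ)) (l j : ℕ) :
    Measurable (Function.uncurry (wone pZ qZ l j)) := by
  unfold wone; split_ifs
  · exact hq
  · exact hp

lemma measurable_wtwo (hp : Measurable (Function.uncurry pZ))
    (hq : Measurable (Function.uncurry qZ)) (l j : ℕ) :
    Measurable (Function.uncurry (wtwo pZ qZ l j)) := by
  unfold wtwo; split_ifs
  · exact hq
  · exact hp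

lemma wone_nonneg (hp : ∀ x z, 0 ≤ pZ x z) (hq : ∀ x z, 0 ≤ qZ x z) (l j : ℕ) (x : X) (z : Z) :
    0 ≤ wone pZ qZ l j x z := by
  unfold wone; split_ifs
  · exact hq x z
  · exact hp x z

lemma wtwo_nonneg (hp : ∀ x z, 0 ≤ pZ x z) (hq : ∀ x z, 0 ≤ qZ x z) (l j : ℕ) (x : X) (z : Z) :
    0 ≤ wtwo pZ qZ l j x z := by
  unfold wtwo; split_ifs
  · exact hq x z
  · exact hp x z

lemma wone_norm (hpn : ∀ x, ∫ z, pZ x z ∂μZ = 1) (hqn : ∀ x, ∫ z, qZ x z ∂μZ = 1)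
    (l j : ℕ) (x : X) : ∫ z, wone pZ qZ l j x z ∂μZ = 1 := by
  unfold wone; split_ifs
  · exact hqn x
  · exact hpn x

lemma wtwo_norm (hpn : ∀ x, ∫ z, pZ x z ∂μZ = 1) (hqn : ∀ x, ∫ z, qZ x z ∂μZ = 1)
    (l j : ℕ) (x : X) : ∫ z, wtwo pZ qZ l j x z ∂μZ = 1 := by
  unfold wtwo; split_ifs
  · exact hqn x
  · exact hpn x

lemma mix_off {l j : ℕ} (h : j ≠ l) :
    mix pZ qZ l j = wone pZ qZ l j ∧ mix pZ qZ l j = wtwo pZ qZ l j := by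
  constructor
  · unfold mix wone; split_ifs <;> first | rfl | omega
  · unfold mix wtwo; split_ifs <;> first | rfl | omega

lemma tail_chain (hb : Measurable b) (hb0 : ∀ x, 0 ≤ b x)
    (hτ : ∀ j, Measurable fun t : X × (Fin j.val → Z) × X => τ j t.1 t.2.1 t.2.2)
    (hτ0 : ∀ j x h x', 0 ≤ τ j x h x')
    (hτn : ∀ j x h, ∫ x', τ j x h x' ∂μX = 1)
    (hp : Measurable (Function.uncurry pZ)) (hq : Measurable (Function.uncurry qZ))
    (hp0 : ∀ x z, 0 ≤ pZ x z) (hq0 : ∀ x z, 0 ≤ qZ x z)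
    (hpn : ∀ x, ∫ z, pZ x z ∂μZ = 1)
    (l : ℕ) (m : ℕ) (hlm : l + 1 ≤ m) :
    ∀ hm : m ≤ n,
      ∫⁻ z, ∫⁻ x, ENNReal.ofReal (W b τ (mix pZ qZ l) m hm z x)
          ∂(Measure.pi fun _ : Fin (m + 1) => μX) ∂(Measure.pi fun _ : Fin m => μZ) =
        ∫⁻ z, ∫⁻ x, ENNReal.ofReal (W b τ (mix pZ qZ l) (l + 1) (le_trans hlm hm) z x)
          ∂(Measure.pi fun _ : Fin (l + 2) => μX) ∂(Measure.pi fun _ : Fin (l + 1) => μZ) := by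
  induction m, hlm using Nat.le_induction with
  | base => intro hm; rfl
  | succ m hlm IH =>
    intro hm
    have hwn : ∀ x', ∫ zl, mix pZ qZ l m x' zl ∂μZ = 1 := by
      intro x'
      rw [mix_gt (show l < m by omega)]
      exact hpn x'
    rw [W_step μX μZ hb hb0 hτ hτ0 hτn (measurable_mix hp hq l) (mix_nonneg hp0 hq0 l)
      m hm hwn]
    exact IH (Nat.le_of_succ_le hm)

lemma abs_sub_le_add (a c : ℝ) (ha : 0 ≤ a) (hc : 0 ≤ c) : |a - c| ≤ a + c := by
  rw [abs_sub_le_iff]; constructor <;> nlinarith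

lemma mix_prod_le (hp0 : ∀ x z, 0 ≤ pZ x z) (hq0 : ∀ x z, 0 ≤ qZ x z)
    (l : Fin n) (z : Fin n → Z) (x : Fin (n + 1) → X) :
    (∏ j : Fin n, mix pZ qZ l.val j.val (x j.succ) (z j)) ≤
      (∏ j : Fin n, wone pZ qZ l.val j.val (x j.succ) (z j)) +
        ∏ j : Fin n, wtwo pZ qZ l.val j.val (x j.succ) (z j) := by
  obtain ⟨k, rfl⟩ : ∃ k, n = k + 1 := ⟨n - 1, by have := l.isLt; omega⟩
  rw [Fin.prod_univ_succAbove _ l, Fin.prod_univ_succAbove _ l,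
    Fin.prod_univ_succAbove (fun j => wtwo pZ qZ l.val j.val (x j.succ) (z j)) l]
  have hoff : ∀ j : Fin k,
      mix pZ qZ l.val (l.succAbove j).val = wone pZ qZ l.val (l.succAbove j).val ∧
      mix pZ qZ l.val (l.succAbove j).val = wtwo pZ qZ l.val (l.succAbove j).val := by
    intro j
    exact mix_off (fun h => Fin.succAbove_ne l j (Fin.ext h))
  have hP0 : 0 ≤ ∏ j : Fin k,
      mix pZ qZ l.val (l.succAbove j).val (x (l.succAbove j).succ) (z (l.succAbove j)) :=
    Finset.prod_nonneg fun j _ => mix_nonneg hp0 hq0 _ _ _ _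
  have h1 : (∏ j : Fin k,
      wone pZ qZ l.val (l.succAbove j).val (x (l.succAbove j).succ) (z (l.succAbove j)))
      = ∏ j : Fin k,
        mix pZ qZ l.val (l.succAbove j).val (x (l.succAbove j).succ) (z (l.succAbove j)) :=
    Finset.prod_congr rfl fun j _ => by rw [(hoff j).1]
  have h2 : (∏ j : Fin k,
      wtwo pZ qZ l.val (l.succAbove j).val (x (l.succAbove j).succ) (z (l.succAbove j)))
      = ∏ j : Fin k,
        mix pZ qZ l.val (l.succAbove j).val (x (l.succAbove j).succ) (z (l.succAbove j)) :=
    Finset.prod_congr rfl fun j _ => by rw [(hoff j).2]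
  rw [h1, h2]
  rw [mix_eq, show wone pZ qZ l.val l.val = pZ from if_neg (lt_irrefl _),
    show wtwo pZ qZ l.val l.val = qZ from if_pos le_rfl]
  rw [← add_mul]
  exact mul_le_mul_of_nonneg_right
    (abs_sub_le_add _ _ (hp0 _ _) (hq0 _ _)) hP0

lemma W_diff_le (hb0 : ∀ x, 0 ≤ b x) (hτ0 : ∀ j x h x', 0 ≤ τ j x h x')
    (hp0 : ∀ x z, 0 ≤ pZ x z) (hq0 : ∀ x z, 0 ≤ qZ x z)
    (z : Fin n → Z) (x : Fin (n + 1) → X) :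
    |W b τ (fun _ => pZ) n le_rfl z x - W b τ (fun _ => qZ) n le_rfl z x| ≤
      ∑ l : Fin n, W b τ (mix pZ qZ l.val) n le_rfl z x := by
  unfold W
  set C := b (x 0) * ∏ j : Fin n,
    τ (j.castLE le_rfl) (x j.castSucc) (fun k => z (k.castLE j.isLt.le)) (x j.succ) with hC
  have hC0 : 0 ≤ C :=
    mul_nonneg (hb0 _) (Finset.prod_nonneg fun j _ => hτ0 _ _ _ _)
  have htel := telescope (fun j => pZ (x j.succ) (z j)) (fun j => qZ (x j.succ) (z j))
    (fun j => hp0 _ _) (fun j => hq0 _ _)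
  calc |C * (∏ j : Fin n, pZ (x j.succ) (z j)) - C * ∏ j : Fin n, qZ (x j.succ) (z j)|
      = C * |(∏ j : Fin n, pZ (x j.succ) (z j)) - ∏ j : Fin n, qZ (x j.succ) (z j)| := by
        rw [← mul_sub, abs_mul, abs_of_nonneg hC0]
    _ ≤ C * ∑ l : Fin n, ∏ j : Fin n,
          (if j.val < l.val then qZ (x j.succ) (z j) else
            if j.val = l.val then |pZ (x j.succ) (z j) - qZ (x j.succ) (z j)|
            else pZ (x j.succ) (z j)) :=
        mul_le_mul_of_nonneg_left htel hC0
    _ = ∑ l : Fin n, C * ∏ j : Fin n,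
          (if j.val < l.val then qZ (x j.succ) (z j) else
            if j.val = l.val then |pZ (x j.succ) (z j) - qZ (x j.succ) (z j)|
            else pZ (x j.succ) (z j)) := Finset.mul_sum _ _ _
    _ = ∑ l : Fin n, C * ∏ j : Fin n, mix pZ qZ l.val j.val (x j.succ) (z j) :=
        Finset.sum_congr rfl fun l _ => congrArg (C * ·)
          (Finset.prod_congr rfl fun j _ => by simp only [mix]; split_ifs <;> rfl)

lemma measurable_TVdisc (hp : Measurable (Function.uncurry pZ))
    (hq : Measurable (Function.uncurry qZ)) :
    Measurable fun x => TVdisc μZ pZ qZ x := by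
  have h : StronglyMeasurable (Function.uncurry fun x z => |pZ x z - qZ x z|) :=
    ((hp.sub hq).abs).stronglyMeasurable
  exact h.integral_prod_right.measurable

lemma TVdisc_nonneg (x : X) : 0 ≤ TVdisc μZ pZ qZ x :=
  integral_nonneg fun z => abs_nonneg _

lemma TVdisc_le_two (hp0 : ∀ x z, 0 ≤ pZ x z) (hq0 : ∀ x z, 0 ≤ qZ x z)
    (hpn : ∀ x, ∫ z, pZ x z ∂μZ = 1) (hqn : ∀ x, ∫ z, qZ x z ∂μZ = 1) (x : X) :
    TVdisc μZ pZ qZ x ≤ 2 := by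
  have hip : Integrable (pZ x) μZ := integrable_of_integral_eq_one (hpn x)
  have hiq : Integrable (qZ x) μZ := integrable_of_integral_eq_one (hqn x)
  have : TVdisc μZ pZ qZ x ≤ ∫ z, (pZ x z + qZ x z) ∂μZ := by
    refine integral_mono (hip.sub hiq).abs (hip.add hiq) fun z => ?_
    exact abs_sub_le_add _ _ (hp0 x z) (hq0 x z)
  refine this.trans ?_
  rw [integral_add hip hiq, hpn, hqn]
  norm_num

lemma Wmix_le_sum (hb0 : ∀ x, 0 ≤ b x) (hτ0 : ∀ j x h x', 0 ≤ τ j x h x')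
    (hp0 : ∀ x z, 0 ≤ pZ x z) (hq0 : ∀ x z, 0 ≤ qZ x z)
    (l : Fin n) (z : Fin n → Z) (x : Fin (n + 1) → X) :
    W b τ (mix pZ qZ l.val) n le_rfl z x ≤
      W b τ (wone pZ qZ l.val) n le_rfl z x + W b τ (wtwo pZ qZ l.val) n le_rfl z x := by
  unfold W
  rw [← mul_add]
  refine mul_le_mul_of_nonneg_left (mix_prod_le hp0 hq0 l z x)
    (mul_nonneg (hb0 _) (Finset.prod_nonneg fun j _ => hτ0 _ _ _ _))

end Main

end Thm1Aux

open Thm1Aux in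
/-- Theorem 1 of the paper: the difference between the expected terminal reward
under the original and simplified observation models is bounded by the maximal
reward times the sum of the expected stepwise discrepancies under the
simplified model. -/
theorem expected_reward_diff_le_sum_discrepancy
    {X Z : Type*} [MeasurableSpace X] [MeasurableSpace Z]
    (μX : Measure X) (μZ : Measure Z) [SigmaFinite μX] [SigmaFinite μZ]
    (n : ℕ)
    (b : X → ℝ) (hb_meas : Measurable b) (hb_nonneg : ∀ x, 0 ≤ b x)
    (hb_norm : ∫ x, b x ∂μX = 1)
    (τ : (j : Fin n) → X → (Fin j.val → Z) → X → ℝ)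
    (hτ_meas : ∀ j, Measurable fun t : X × (Fin j.val → Z) × X => τ j t.1 t.2.1 t.2.2)
    (hτ_nonneg : ∀ j x h x', 0 ≤ τ j x h x')
    (hτ_norm : ∀ j x h, ∫ x', τ j x h x' ∂μX = 1)
    (pZ qZ : X → Z → ℝ)
    (hp_meas : Measurable (Function.uncurry pZ))
    (hq_meas : Measurable (Function.uncurry qZ))
    (hp_nonneg : ∀ x z, 0 ≤ pZ x z) (hq_nonneg : ∀ x z, 0 ≤ qZ x z)
    (hp_norm : ∀ x, ∫ z, pZ x z ∂μZ = 1) (hq_norm : ∀ x, ∫ z, qZ x z ∂μZ = 1)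
    (r : X → (Fin n → Z) → ℝ)
    (hr_meas : Measurable fun t : X × (Fin n → Z) => r t.1 t.2)
    (R : ℝ) (hR : 0 ≤ R) (hr_bdd : ∀ x z, |r x z| ≤ R) :
    |Eexp μX μZ b τ pZ n le_rfl r - Eexp μX μZ b τ qZ n le_rfl r|
      ≤ R * ∑ l : Fin n, Dstep μX μZ b τ pZ qZ l := by
  classical
  -- abbreviations
  set M := (Measure.pi fun _ : Fin n => μZ).prod (Measure.pi fun _ : Fin (n + 1) => μX)
    with hM
  -- measurability of the various W integrands
  have hWpm : Measurable fun y : (Fin n → Z) × (Fin (n + 1) → X) =>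
      W b τ (fun _ => pZ) n le_rfl y.1 y.2 :=
    measurable_W hb_meas hτ_meas (fun _ => hp_meas) n le_rfl
  have hWqm : Measurable fun y : (Fin n → Z) × (Fin (n + 1) → X) =>
      W b τ (fun _ => qZ) n le_rfl y.1 y.2 :=
    measurable_W hb_meas hτ_meas (fun _ => hq_meas) n le_rfl
  have hWlm : ∀ l : Fin n, Measurable fun y : (Fin n → Z) × (Fin (n + 1) → X) =>
      W b τ (mix pZ qZ l.val) n le_rfl y.1 y.2 :=
    fun l => measurable_W hb_meas hτ_meas (measurable_mix hp_meas hq_meas l.val) n le_rfl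
  have hW1m : ∀ l : Fin n, Measurable fun y : (Fin n → Z) × (Fin (n + 1) → X) =>
      W b τ (wone pZ qZ l.val) n le_rfl y.1 y.2 :=
    fun l => measurable_W hb_meas hτ_meas (measurable_wone hp_meas hq_meas l.val) n le_rfl
  have hW2m : ∀ l : Fin n, Measurable fun y : (Fin n → Z) × (Fin (n + 1) → X) =>
      W b τ (wtwo pZ qZ l.val) n le_rfl y.1 y.2 :=
    fun l => measurable_W hb_meas hτ_meas (measurable_wtwo hp_meas hq_meas l.val) n le_rfl
  -- masses over the product measure
  have hprod : ∀ (w : ℕ → X → Z → ℝ)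
      (hw : Measurable fun y : (Fin n → Z) × (Fin (n + 1) → X) => W b τ w n le_rfl y.1 y.2),
      ∫⁻ y, ENNReal.ofReal (W b τ w n le_rfl y.1 y.2) ∂M =
        ∫⁻ z, ∫⁻ x, ENNReal.ofReal (W b τ w n le_rfl z x)
          ∂(Measure.pi fun _ : Fin (n + 1) => μX) ∂(Measure.pi fun _ : Fin n => μZ) := by
    intro w hw
    rw [hM, lintegral_prod (fun y => ENNReal.ofReal (W b τ w n le_rfl y.1 y.2))
      (ENNReal.measurable_ofReal.comp hw).aemeasurable]
  have massP : ∫⁻ y, ENNReal.ofReal (W b τ (fun _ => pZ) n le_rfl y.1 y.2) ∂M = 1 := by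
    rw [hprod _ hWpm]
    exact W_mass μX μZ hb_meas hb_nonneg hb_norm hτ_meas hτ_nonneg hτ_norm
      (fun _ => hp_meas) (fun _ x z => hp_nonneg x z) (fun _ x => hp_norm x) n le_rfl
  have massQ : ∫⁻ y, ENNReal.ofReal (W b τ (fun _ => qZ) n le_rfl y.1 y.2) ∂M = 1 := by
    rw [hprod _ hWqm]
    exact W_mass μX μZ hb_meas hb_nonneg hb_norm hτ_meas hτ_nonneg hτ_norm
      (fun _ => hq_meas) (fun _ x z => hq_nonneg x z) (fun _ x => hq_norm x) n le_rfl
  have mass1 : ∀ l : Fin n,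
      ∫⁻ y, ENNReal.ofReal (W b τ (wone pZ qZ l.val) n le_rfl y.1 y.2) ∂M = 1 := by
    intro l
    rw [hprod _ (hW1m l)]
    exact W_mass μX μZ hb_meas hb_nonneg hb_norm hτ_meas hτ_nonneg hτ_norm
      (measurable_wone hp_meas hq_meas l.val) (wone_nonneg hp_nonneg hq_nonneg l.val)
      (fun j x => wone_norm μZ hp_norm hq_norm l.val j x) n le_rfl
  have mass2 : ∀ l : Fin n,
      ∫⁻ y, ENNReal.ofReal (W b τ (wtwo pZ qZ l.val) n le_rfl y.1 y.2) ∂M = 1 := by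
    intro l
    rw [hprod _ (hW2m l)]
    exact W_mass μX μZ hb_meas hb_nonneg hb_norm hτ_meas hτ_nonneg hτ_norm
      (measurable_wtwo hp_meas hq_meas l.val) (wtwo_nonneg hp_nonneg hq_nonneg l.val)
      (fun j x => wtwo_norm μZ hp_norm hq_norm l.val j x) n le_rfl
  -- lintegral of the mixed weight over M, identified with the Dstep lintegral
  have hLD : ∀ l : Fin n,
      ∫⁻ y, ENNReal.ofReal (W b τ (mix pZ qZ l.val) n le_rfl y.1 y.2) ∂M =
        ∫⁻ z, ∫⁻ x, ENNReal.ofReal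
            (Bpre b τ qZ l.val l.isLt z x * TVdisc μZ pZ qZ (x (Fin.last (l.val + 1))))
          ∂(Measure.pi fun _ : Fin (l.val + 2) => μX)
          ∂(Measure.pi fun _ : Fin l.val => μZ) := by
    intro l
    rw [hprod _ (hWlm l)]
    refine (tail_chain μX μZ hb_meas hb_nonneg hτ_meas hτ_nonneg hτ_norm hp_meas hq_meas
      hp_nonneg hq_nonneg hp_norm l.val n l.isLt le_rfl).trans ?_
    exact collapse_last μX μZ hb_meas hτ_meas hb_nonneg hτ_nonneg hp_meas hq_meas
      hp_nonneg hq_nonneg hp_norm hq_norm l.val l.isLt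
  -- bound on the mixed mass
  have hbound : ∀ l : Fin n,
      ∫⁻ y, ENNReal.ofReal (W b τ (mix pZ qZ l.val) n le_rfl y.1 y.2) ∂M ≤ 2 := by
    intro l
    have hle : ∀ y : (Fin n → Z) × (Fin (n + 1) → X),
        ENNReal.ofReal (W b τ (mix pZ qZ l.val) n le_rfl y.1 y.2) ≤
          ENNReal.ofReal (W b τ (wone pZ qZ l.val) n le_rfl y.1 y.2) +
            ENNReal.ofReal (W b τ (wtwo pZ qZ l.val) n le_rfl y.1 y.2) := by
      intro y
      refine le_trans (ENNReal.ofReal_le_ofReal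
        (Wmix_le_sum hb_nonneg hτ_nonneg hp_nonneg hq_nonneg l y.1 y.2)) ?_
      exact ENNReal.ofReal_add_le
    calc ∫⁻ y, ENNReal.ofReal (W b τ (mix pZ qZ l.val) n le_rfl y.1 y.2) ∂M
        ≤ ∫⁻ y, (ENNReal.ofReal (W b τ (wone pZ qZ l.val) n le_rfl y.1 y.2) +
            ENNReal.ofReal (W b τ (wtwo pZ qZ l.val) n le_rfl y.1 y.2)) ∂M :=
          lintegral_mono hle
      _ = (∫⁻ y, ENNReal.ofReal (W b τ (wone pZ qZ l.val) n le_rfl y.1 y.2) ∂M) +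
            ∫⁻ y, ENNReal.ofReal (W b τ (wtwo pZ qZ l.val) n le_rfl y.1 y.2) ∂M :=
          lintegral_add_left (ENNReal.measurable_ofReal.comp (hW1m l)) _
      _ = 2 := by rw [mass1 l, mass2 l]; norm_num
  have hLDne : ∀ l : Fin n,
      (∫⁻ z, ∫⁻ x, ENNReal.ofReal
          (Bpre b τ qZ l.val l.isLt z x * TVdisc μZ pZ qZ (x (Fin.last (l.val + 1))))
        ∂(Measure.pi fun _ : Fin (l.val + 2) => μX)
        ∂(Measure.pi fun _ : Fin l.val => μZ)) ≠ ⊤ := by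
    intro l
    rw [← hLD l]
    exact ((hbound l).trans_lt (by norm_num)).ne
  -- integrability of the W integrands over M
  have hintWp : Integrable (fun y : (Fin n → Z) × (Fin (n + 1) → X) =>
      W b τ (fun _ => pZ) n le_rfl y.1 y.2) M :=
    integrable_of_nonneg_lintegral_ne_top hWpm
      (fun y => W_nonneg hb_nonneg hτ_nonneg (fun _ x z => hp_nonneg x z) n le_rfl y.1 y.2)
      (by rw [massP]; exact ENNReal.one_ne_top)
  have hintWq : Integrable (fun y : (Fin n → Z) × (Fin (n + 1) → X) =>
      W b τ (fun _ => qZ) n le_rfl y.1 y.2) M :=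
    integrable_of_nonneg_lintegral_ne_top hWqm
      (fun y => W_nonneg hb_nonneg hτ_nonneg (fun _ x z => hq_nonneg x z) n le_rfl y.1 y.2)
      (by rw [massQ]; exact ENNReal.one_ne_top)
  have hintWl : ∀ l : Fin n, Integrable (fun y : (Fin n → Z) × (Fin (n + 1) → X) =>
      W b τ (mix pZ qZ l.val) n le_rfl y.1 y.2) M := by
    intro l
    refine integrable_of_nonneg_lintegral_ne_top (hWlm l)
      (fun y => W_nonneg hb_nonneg hτ_nonneg (mix_nonneg hp_nonneg hq_nonneg l.val)
        n le_rfl y.1 y.2) ?_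
    exact ((hbound l).trans_lt (by norm_num)).ne
  -- the reward factor
  have hrc : Measurable fun y : (Fin n → Z) × (Fin (n + 1) → X) =>
      r (y.2 (Fin.last n)) y.1 := by
    have hmap : Measurable fun y : (Fin n → Z) × (Fin (n + 1) → X) =>
        (y.2 (Fin.last n), y.1) :=
      ((measurable_pi_apply _).comp measurable_snd).prodMk measurable_fst
    exact hr_meas.comp hmap
  have hfint : ∀ (w : ℕ → X → Z → ℝ)
      (hw : Measurable fun y : (Fin n → Z) × (Fin (n + 1) → X) => W b τ w n le_rfl y.1 y.2)
      (hw0 : ∀ y : (Fin n → Z) × (Fin (n + 1) → X), 0 ≤ W b τ w n le_rfl y.1 y.2)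
      (hwi : Integrable (fun y : (Fin n → Z) × (Fin (n + 1) → X) =>
        W b τ w n le_rfl y.1 y.2) M),
      Integrable (fun y : (Fin n → Z) × (Fin (n + 1) → X) =>
        W b τ w n le_rfl y.1 y.2 * r (y.2 (Fin.last n)) y.1) M := by
    intro w hw hw0 hwi
    refine Integrable.mono' (hwi.const_mul R) (hw.mul hrc).aestronglyMeasurable ?_
    refine Filter.Eventually.of_forall fun y => ?_
    rw [Real.norm_eq_abs, abs_mul]
    calc |W b τ w n le_rfl y.1 y.2| * |r (y.2 (Fin.last n)) y.1|
        ≤ |W b τ w n le_rfl y.1 y.2| * R :=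
          mul_le_mul_of_nonneg_left (hr_bdd _ _) (abs_nonneg _)
      _ = R * W b τ w n le_rfl y.1 y.2 := by
          rw [abs_of_nonneg (hw0 y), mul_comm]
  have hfPint := hfint (fun _ => pZ) hWpm
    (fun y => W_nonneg hb_nonneg hτ_nonneg (fun _ x z => hp_nonneg x z) n le_rfl y.1 y.2)
    hintWp
  have hfQint := hfint (fun _ => qZ) hWqm
    (fun y => W_nonneg hb_nonneg hτ_nonneg (fun _ x z => hq_nonneg x z) n le_rfl y.1 y.2)
    hintWq
  -- Eexp as a product integral
  have hEp : Eexp μX μZ b τ pZ n le_rfl r =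
      ∫ y, W b τ (fun _ => pZ) n le_rfl y.1 y.2 * r (y.2 (Fin.last n)) y.1 ∂M :=
    integral_integral (f := fun z x =>
      W b τ (fun _ => pZ) n le_rfl z x * r (x (Fin.last n)) z) hfPint
  have hEq' : Eexp μX μZ b τ qZ n le_rfl r =
      ∫ y, W b τ (fun _ => qZ) n le_rfl y.1 y.2 * r (y.2 (Fin.last n)) y.1 ∂M :=
    integral_integral (f := fun z x =>
      W b τ (fun _ => qZ) n le_rfl z x * r (x (Fin.last n)) z) hfQint
  -- identification of Dstep with the mixed-W integral
  have hWlint : ∀ l : Fin n,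
      ∫ y, W b τ (mix pZ qZ l.val) n le_rfl y.1 y.2 ∂M = Dstep μX μZ b τ pZ qZ l := by
    intro l
    have h1 : ∫ y, W b τ (mix pZ qZ l.val) n le_rfl y.1 y.2 ∂M =
        (∫⁻ y, ENNReal.ofReal (W b τ (mix pZ qZ l.val) n le_rfl y.1 y.2) ∂M).toReal :=
      integral_eq_lintegral_of_nonneg_ae
        (Filter.Eventually.of_forall fun y =>
          W_nonneg hb_nonneg hτ_nonneg (mix_nonneg hp_nonneg hq_nonneg l.val) n le_rfl y.1 y.2)
        (hWlm l).aestronglyMeasurable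
    have h2 : Dstep μX μZ b τ pZ qZ l =
        (∫⁻ z, ∫⁻ x, ENNReal.ofReal
            (Bpre b τ qZ l.val l.isLt z x * TVdisc μZ pZ qZ (x (Fin.last (l.val + 1))))
          ∂(Measure.pi fun _ : Fin (l.val + 2) => μX)
          ∂(Measure.pi fun _ : Fin l.val => μZ)).toReal := by
      refine integral_integral_eq_toReal _ _
        (fun z x => Bpre b τ qZ l.val l.isLt z x * TVdisc μZ pZ qZ (x (Fin.last (l.val + 1))))
        ?_ ?_ (hLDne l)
      · exact (measurable_Bpre hb_meas hτ_meas hq_meas l.val l.isLt).mul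
          ((measurable_TVdisc μZ hp_meas hq_meas).comp
            ((measurable_pi_apply _).comp measurable_snd))
      · exact fun z x => mul_nonneg
          (Bpre_nonneg hb_nonneg hτ_nonneg hq_nonneg l.val l.isLt z x)
          (TVdisc_nonneg μZ _)
    rw [h1, hLD l, h2]
  -- main chain of inequalities
  rw [hEp, hEq', ← integral_sub hfPint hfQint]
  have habs : |∫ y, (W b τ (fun _ => pZ) n le_rfl y.1 y.2 * r (y.2 (Fin.last n)) y.1 -
      W b τ (fun _ => qZ) n le_rfl y.1 y.2 * r (y.2 (Fin.last n)) y.1) ∂M| ≤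
      ∫ y, |W b τ (fun _ => pZ) n le_rfl y.1 y.2 * r (y.2 (Fin.last n)) y.1 -
        W b τ (fun _ => qZ) n le_rfl y.1 y.2 * r (y.2 (Fin.last n)) y.1| ∂M := by
    rw [← Real.norm_eq_abs]
    refine (norm_integral_le_integral_norm _).trans_eq ?_
    simp [Real.norm_eq_abs]
  refine habs.trans ?_
  have hpt : ∀ y : (Fin n → Z) × (Fin (n + 1) → X),
      |W b τ (fun _ => pZ) n le_rfl y.1 y.2 * r (y.2 (Fin.last n)) y.1 -
        W b τ (fun _ => qZ) n le_rfl y.1 y.2 * r (y.2 (Fin.last n)) y.1| ≤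
        R * ∑ l : Fin n, W b τ (mix pZ qZ l.val) n le_rfl y.1 y.2 := by
    intro y
    rw [← sub_mul, abs_mul]
    calc |W b τ (fun _ => pZ) n le_rfl y.1 y.2 - W b τ (fun _ => qZ) n le_rfl y.1 y.2| *
          |r (y.2 (Fin.last n)) y.1|
        ≤ (∑ l : Fin n, W b τ (mix pZ qZ l.val) n le_rfl y.1 y.2) * R := by
          refine mul_le_mul (W_diff_le hb_nonneg hτ_nonneg hp_nonneg hq_nonneg y.1 y.2)
            (hr_bdd _ _) (abs_nonneg _) ?_
          exact Finset.sum_nonneg fun l _ =>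
            W_nonneg hb_nonneg hτ_nonneg (mix_nonneg hp_nonneg hq_nonneg l.val) n le_rfl y.1 y.2
      _ = R * ∑ l : Fin n, W b τ (mix pZ qZ l.val) n le_rfl y.1 y.2 := mul_comm _ _
  have hsum_int : Integrable (fun y : (Fin n → Z) × (Fin (n + 1) → X) =>
      ∑ l : Fin n, W b τ (mix pZ qZ l.val) n le_rfl y.1 y.2) M :=
    integrable_finset_sum _ fun l _ => hintWl l
  calc ∫ y, |W b τ (fun _ => pZ) n le_rfl y.1 y.2 * r (y.2 (Fin.last n)) y.1 -
        W b τ (fun _ => qZ) n le_rfl y.1 y.2 * r (y.2 (Fin.last n)) y.1| ∂M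
      ≤ ∫ y, R * ∑ l : Fin n, W b τ (mix pZ qZ l.val) n le_rfl y.1 y.2 ∂M := by
        refine integral_mono_of_nonneg (Filter.Eventually.of_forall fun y => abs_nonneg _)
          (hsum_int.const_mul R) (Filter.Eventually.of_forall hpt)
    _ = R * ∑ l : Fin n, ∫ y, W b τ (mix pZ qZ l.val) n le_rfl y.1 y.2 ∂M := by
        rw [integral_const_mul, integral_finset_sum _ fun l _ => hintWl l]
    _ = R * ∑ l : Fin n, Dstep μX μZ b τ pZ qZ l := by
        congr 1
        exact Finset.sum_congr rfl fun l _ => hWlint l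

end
end

section
/- For each 0 ≤ i ≤ n let r_i : X × Z^i → ℝ be measurable with |r_i| ≤ R_i for constants R_i ≥ 0, and let γ ∈ (0,1]. Define the value under observation model ρ as V^ρ := ∑_{i=0}^n γ^i E_ρ^{(i)}[r_i]. Then the difference between the values under the original and simplified observation models satisfies |V^{p_Z} − V^{q_Z}| ≤ ∑_{i=1}^n D_i · ∑_{l=i}^n γ^l R_l, i.e. |V^{p_Z} − V^{q_Z}| ≤ ∑_{i=1}^n W_i D_i where W_i := ∑_{l=i}^n γ^l R_l. -/
set_option linter.unusedSectionVars false
set_option maxHeartbeats 1000000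
open MeasureTheory ENNReal
noncomputable section
namespace VDA
variable {α : Type*} [MeasurableSpace α]

lemma measurable_snoc (m : ℕ) :
    Measurable (fun q : (Fin m → α) × α => (Fin.snoc q.1 q.2 : Fin (m+1) → α)) := by
  apply measurable_pi_lambda
  intro j
  induction j using Fin.lastCases with
  | last => simpa [Fin.snoc_last] using measurable_snd
  | cast k => have h : Measurable fun c : (Fin m → α) × α => c.1 k := (measurable_pi_apply k).comp measurable_fst; simpa [Fin.snoc_castSucc] using h

lemma lintegral_pi_snoc (μ : Measure α) [SigmaFinite μ] (m : ℕ)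
    (F : (Fin (m+1) → α) → ℝ≥0∞) (hF : Measurable F) :
    ∫⁻ x, F x ∂(Measure.pi fun _ : Fin (m+1) => μ)
      = ∫⁻ x' : Fin m → α, ∫⁻ a, F (Fin.snoc x' a) ∂μ ∂(Measure.pi fun _ : Fin m => μ) := by
  have h := measurePreserving_piFinSuccAbove (fun _ : Fin (m+1) => μ) (Fin.last m)
  set e := MeasurableEquiv.piFinSuccAbove (fun _ : Fin (m+1) => α) (Fin.last m) with he
  calc ∫⁻ x, F x ∂(Measure.pi fun _ : Fin (m+1) => μ)
      = ∫⁻ x, F (e.symm (e x)) ∂(Measure.pi fun _ : Fin (m+1) => μ) := by simp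
    _ = ∫⁻ y, F (e.symm y) ∂(Measure.map e (Measure.pi fun _ : Fin (m+1) => μ)) :=
        (lintegral_map_equiv (fun y => F (e.symm y)) e).symm
    _ = ∫⁻ y, F (e.symm y) ∂(μ.prod (Measure.pi fun _ : Fin m => μ)) := by rw [h.map_eq]
    _ = ∫⁻ x' : Fin m → α, ∫⁻ a, F (e.symm (a, x')) ∂μ ∂(Measure.pi fun _ : Fin m => μ) :=
        lintegral_prod_symm _ (hF.comp e.symm.measurable).aemeasurable
    _ = _ := by
        congr 1; ext x'; congr 1; ext a
        congr 1
        simp [he, MeasurableEquiv.piFinSuccAbove_symm_apply, Fin.snocEquiv]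

variable {X Z : Type*} [MeasurableSpace X] [MeasurableSpace Z]

lemma lintegral_zx_snoc (μX : Measure X) (μZ : Measure Z) [SigmaFinite μX] [SigmaFinite μZ]
    (i : ℕ) (F : (Fin (i+1) → Z) × (Fin (i+2) → X) → ℝ≥0∞) (hF : Measurable F) :
    ∫⁻ z, ∫⁻ x, F (z, x) ∂(Measure.pi fun _ : Fin (i+2) => μX)
        ∂(Measure.pi fun _ : Fin (i+1) => μZ)
      = ∫⁻ z' : Fin i → Z, ∫⁻ x' : Fin (i+1) → X, ∫⁻ xl, ∫⁻ zl,
          F (Fin.snoc z' zl, Fin.snoc x' xl) ∂μZ ∂μX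
          ∂(Measure.pi fun _ : Fin (i+1) => μX) ∂(Measure.pi fun _ : Fin i => μZ) := by
  have hFin : Measurable (fun p : ((Fin (i+1) → Z) × (Fin (i+1) → X)) × X =>
      F (p.1.1, Fin.snoc p.1.2 p.2)) :=
    hF.comp ((measurable_fst.comp measurable_fst).prodMk
      ((measurable_snoc (i+1)).comp ((measurable_snd.comp measurable_fst).prodMk measurable_snd)))
  have hG : Measurable (fun z : Fin (i+1) → Z =>
      ∫⁻ x' : Fin (i+1) → X, ∫⁻ xl, F (z, Fin.snoc x' xl) ∂μX
        ∂(Measure.pi fun _ : Fin (i+1) => μX)) := by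
    apply Measurable.lintegral_prod_right'
      (f := fun p : (Fin (i+1) → Z) × (Fin (i+1) → X) => ∫⁻ xl, F (p.1, Fin.snoc p.2 xl) ∂μX)
    exact Measurable.lintegral_prod_right' hFin
  calc ∫⁻ z, ∫⁻ x, F (z, x) ∂(Measure.pi fun _ : Fin (i+2) => μX)
        ∂(Measure.pi fun _ : Fin (i+1) => μZ)
      = ∫⁻ z, ∫⁻ x' : Fin (i+1) → X, ∫⁻ xl, F (z, Fin.snoc x' xl) ∂μX
          ∂(Measure.pi fun _ : Fin (i+1) => μX) ∂(Measure.pi fun _ : Fin (i+1) => μZ) := by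
        refine lintegral_congr fun z => ?_
        exact lintegral_pi_snoc μX (i+1) (fun x => F (z, x)) (hF.comp measurable_prodMk_left)
    _ = ∫⁻ z' : Fin i → Z, ∫⁻ zl, ∫⁻ x' : Fin (i+1) → X, ∫⁻ xl,
          F (Fin.snoc z' zl, Fin.snoc x' xl) ∂μX ∂(Measure.pi fun _ : Fin (i+1) => μX) ∂μZ
          ∂(Measure.pi fun _ : Fin i => μZ) := by
        exact lintegral_pi_snoc μZ i _ hG
    _ = ∫⁻ z' : Fin i → Z, ∫⁻ x' : Fin (i+1) → X, ∫⁻ zl, ∫⁻ xl,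
          F (Fin.snoc z' zl, Fin.snoc x' xl) ∂μX ∂μZ
          ∂(Measure.pi fun _ : Fin (i+1) => μX) ∂(Measure.pi fun _ : Fin i => μZ) := by
        refine lintegral_congr fun z' => ?_
        refine lintegral_lintegral_swap ?_
        refine Measurable.aemeasurable ?_
        refine Measurable.lintegral_prod_right'
          (f := fun q : (Z × (Fin (i+1) → X)) × X =>
            F (Fin.snoc z' q.1.1, Fin.snoc q.1.2 q.2)) ?_
        exact hF.comp (((measurable_snoc i).comp
            (measurable_const.prodMk (measurable_fst.comp measurable_fst))).prodMk
          ((measurable_snoc (i+1)).comp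
            ((measurable_snd.comp measurable_fst).prodMk measurable_snd)))
    _ = _ := by
        refine lintegral_congr fun z' => ?_
        refine lintegral_congr fun x' => ?_
        refine lintegral_lintegral_swap ?_
        refine Measurable.aemeasurable ?_
        exact hF.comp (((measurable_snoc i).comp
            (measurable_const.prodMk measurable_fst)).prodMk
          ((measurable_snoc (i+1)).comp (measurable_const.prodMk measurable_snd)))

open ENNReal

variable {X Z : Type*} [MeasurableSpace X] [MeasurableSpace Z]

lemma lint_z_snoc (μX : Measure X) (μZ : Measure Z) [SigmaFinite μX] [SigmaFinite μZ]
    (l m : ℕ) (F : (Fin (l+1) → Z) × (Fin m → X) → ℝ≥0∞) (hF : Measurable F) :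
    ∫⁻ z, ∫⁻ x, F (z, x) ∂(Measure.pi fun _ : Fin m => μX)
        ∂(Measure.pi fun _ : Fin (l+1) => μZ)
      = ∫⁻ z' : Fin l → Z, ∫⁻ x : Fin m → X, ∫⁻ zl, F (Fin.snoc z' zl, x) ∂μZ
          ∂(Measure.pi fun _ : Fin m => μX) ∂(Measure.pi fun _ : Fin l => μZ) := by
  have hG : Measurable (fun z : Fin (l+1) → Z =>
      ∫⁻ x, F (z, x) ∂(Measure.pi fun _ : Fin m => μX)) :=
    Measurable.lintegral_prod_right' hF
  rw [lintegral_pi_snoc μZ l _ hG]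
  refine lintegral_congr fun z' => ?_
  refine lintegral_lintegral_swap ?_
  refine Measurable.aemeasurable ?_
  exact hF.comp (((measurable_snoc l).comp
      (measurable_const.prodMk measurable_fst)).prodMk measurable_snd)

/-- an integrable nonneg function with Bochner integral `1` has `lintegral` of
its `ofReal` equal to `1`. -/
lemma lint_of_norm {α : Type*} [MeasurableSpace α] (μ : Measure α) (g : α → ℝ)
    (h0 : ∀ a, 0 ≤ g a) (hn : ∫ a, g a ∂μ = 1) :
    ∫⁻ a, ENNReal.ofReal (g a) ∂μ = 1 := by
  have hint : Integrable g μ := by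
    by_contra h
    rw [integral_undef h] at hn
    norm_num at hn
  rw [← ofReal_integral_eq_lintegral_ofReal hint (Filter.Eventually.of_forall h0), hn,
    ENNReal.ofReal_one]

lemma integrable_of_norm_bound {α : Type*} [MeasurableSpace α] (μ : Measure α)
    (f g : α → ℝ) (hf : AEStronglyMeasurable f μ) (hbd : ∀ a, ‖f a‖ ≤ g a)
    (hg : ∫⁻ a, ENNReal.ofReal (g a) ∂μ ≠ ⊤) : Integrable f μ := by
  refine ⟨hf, ?_⟩
  rw [hasFiniteIntegral_iff_norm]
  exact lt_of_le_of_lt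
    (lintegral_mono fun a => ENNReal.ofReal_le_ofReal (hbd a)) hg.lt_top

/-- telescoping identity for a difference of products. -/
lemma prod_sub_prod (m : ℕ) (F G : Fin m → ℝ) :
    ∏ j, F j - ∏ j, G j
      = ∑ l : Fin m, ∏ j : Fin m,
          (if (j : ℕ) < (l : ℕ) then G j
            else if (j : ℕ) = (l : ℕ) then F j - G j else F j) := by
  induction m with
  | zero => simp
  | succ m ih =>
    rw [Fin.prod_univ_castSucc (f := F), Fin.prod_univ_castSucc (f := G),
      Fin.sum_univ_castSucc]
    have hlast : (∏ j : Fin (m+1),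
        (if (j : ℕ) < ((Fin.last m : Fin (m+1)) : ℕ) then G j
          else if (j : ℕ) = ((Fin.last m : Fin (m+1)) : ℕ) then F j - G j else F j))
        = (∏ j : Fin m, G j.castSucc) * (F (Fin.last m) - G (Fin.last m)) := by
      rw [Fin.prod_univ_castSucc]
      congr 1
      · refine Finset.prod_congr rfl fun j _ => ?_
        have h1 : ((j.castSucc : Fin (m+1)) : ℕ) < m := j.isLt
        simp [h1]
      · simp
    have hcast : ∀ l : Fin m, (∏ j : Fin (m+1),
        (if (j : ℕ) < ((l.castSucc : Fin (m+1)) : ℕ) then G j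
          else if (j : ℕ) = ((l.castSucc : Fin (m+1)) : ℕ) then F j - G j else F j))
        = (∏ j : Fin m,
            (if (j : ℕ) < (l : ℕ) then G j.castSucc
              else if (j : ℕ) = (l : ℕ) then F j.castSucc - G j.castSucc
              else F j.castSucc)) * F (Fin.last m) := by
      intro l
      rw [Fin.prod_univ_castSucc]
      congr 1
      · have hl := l.isLt
        have h3 : ¬ (m < (l : ℕ)) := by omega
        have h4 : ¬ (m = (l : ℕ)) := by omega
        simp [Fin.val_last, h3, h4]
    calc (∏ j : Fin m, F j.castSucc) * F (Fin.last m)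
          - (∏ j : Fin m, G j.castSucc) * G (Fin.last m)
        = (∏ j : Fin m, F j.castSucc - ∏ j : Fin m, G j.castSucc) * F (Fin.last m)
          + (∏ j : Fin m, G j.castSucc) * (F (Fin.last m) - G (Fin.last m)) := by ring
      _ = _ := by
        rw [ih (fun j => F j.castSucc) (fun j => G j.castSucc), Finset.sum_mul]
        rw [← hlast]
        congr 1
        refine Finset.sum_congr rfl fun l _ => ?_
        rw [hcast l]

lemma snoc_eq_of_val {α : Type*} {m : ℕ} (p : Fin m → α) (x : α) (j : Fin (m+1))
    (j' : Fin m) (h : (j : ℕ) = (j' : ℕ)) : (Fin.snoc p x : Fin (m+1) → α) j = p j' := by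
  induction j using Fin.lastCases with
  | last => exact absurd h (by have := j'.isLt; simp; omega)
  | cast k =>
    rw [Fin.snoc_castSucc]
    congr 1
    ext
    simpa using h

lemma snoc_eq_last_of_val {α : Type*} {m : ℕ} (p : Fin m → α) (x : α) (j : Fin (m+1))
    (h : (j : ℕ) = m) : (Fin.snoc p x : Fin (m+1) → α) j = x := by
  have hj : j = Fin.last m := by ext; exact h
  rw [hj, Fin.snoc_last]

lemma snoc_comp_castLE {α : Type*} {m m' : ℕ} (p : Fin m → α) (x : α)
    (h' : m' ≤ m + 1) (h : m' ≤ m) :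
    (fun k : Fin m' => (Fin.snoc p x : Fin (m+1) → α) (k.castLE h'))
      = fun k : Fin m' => p (k.castLE h) := by
  funext k
  exact snoc_eq_of_val _ _ _ _ (by simp)

section Main

variable {X Z : Type*} [MeasurableSpace X] [MeasurableSpace Z]
variable (μX : Measure X) (μZ : Measure Z) [SigmaFinite μX] [SigmaFinite μZ]
variable {n : ℕ} (b : X → ℝ) (τ : (j : Fin n) → X → (Fin j.val → Z) → X → ℝ)

/-- weight density with general per-step observation factors. -/
def core (i : ℕ) (hi : i ≤ n) (σ : Fin i → X → Z → ℝ)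
    (p : (Fin i → Z) × (Fin (i+1) → X)) : ℝ :=
  b (p.2 0) *
    (∏ j : Fin i, τ (j.castLE hi) (p.2 j.castSucc)
      (fun k => p.1 (k.castLE j.isLt.le)) (p.2 j.succ)) *
    ∏ j : Fin i, σ j (p.2 j.succ) (p.1 j)

noncomputable def lint (i : ℕ) (hi : i ≤ n) (σ : Fin i → X → Z → ℝ) : ℝ≥0∞ :=
  ∫⁻ z : Fin i → Z, ∫⁻ x : Fin (i+1) → X, ENNReal.ofReal (core b τ i hi σ (z, x))
    ∂(Measure.pi fun _ => μX) ∂(Measure.pi fun _ => μZ)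

lemma meas_core (hb_meas : Measurable b)
    (hτ_meas : ∀ j, Measurable fun t : X × (Fin j.val → Z) × X => τ j t.1 t.2.1 t.2.2)
    (i : ℕ) (hi : i ≤ n) (σ : Fin i → X → Z → ℝ)
    (hσ : ∀ j, Measurable fun t : X × Z => σ j t.1 t.2) :
    Measurable (core b τ i hi σ) := by
  unfold core
  have h1 : Measurable (fun p : (Fin i → Z) × (Fin (i+1) → X) =>
      ∏ j : Fin i, τ (j.castLE hi) (p.2 j.castSucc)
        (fun k => p.1 (k.castLE j.isLt.le)) (p.2 j.succ)) := by
    refine Finset.measurable_prod _ fun j _ => ?_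
    have hmap : Measurable (fun p : (Fin i → Z) × (Fin (i+1) → X) =>
        ((p.2 j.castSucc, ((fun k => p.1 (k.castLE j.isLt.le)), p.2 j.succ)) :
          X × (Fin ((j.castLE hi : Fin n)).val → Z) × X)) :=
      ((measurable_pi_apply _).comp measurable_snd).prodMk
        ((measurable_pi_lambda _ fun k => (measurable_pi_apply _).comp measurable_fst).prodMk
          ((measurable_pi_apply _).comp measurable_snd))
    exact (hτ_meas (j.castLE hi)).comp hmap
  have h2 : Measurable (fun p : (Fin i → Z) × (Fin (i+1) → X) =>
      ∏ j : Fin i, σ j (p.2 j.succ) (p.1 j)) := by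
    refine Finset.measurable_prod _ fun j _ => ?_
    have hmap : Measurable (fun p : (Fin i → Z) × (Fin (i+1) → X) =>
        ((p.2 j.succ, p.1 j) : X × Z)) :=
      ((measurable_pi_apply _).comp measurable_snd).prodMk
        ((measurable_pi_apply _).comp measurable_fst)
    exact (hσ j).comp hmap
  have h0 : Measurable (fun p : (Fin i → Z) × (Fin (i+1) → X) => b (p.2 0)) :=
    hb_meas.comp ((measurable_pi_apply 0).comp measurable_snd)
  exact (h0.mul h1).mul h2

lemma core_nonneg (hb0 : ∀ x, 0 ≤ b x) (hτ0 : ∀ j x h x', 0 ≤ τ j x h x')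
    (i : ℕ) (hi : i ≤ n) (σ : Fin i → X → Z → ℝ) (hσ0 : ∀ j x z, 0 ≤ σ j x z)
    (p : (Fin i → Z) × (Fin (i+1) → X)) : 0 ≤ core b τ i hi σ p := by
  unfold core
  refine mul_nonneg (mul_nonneg (hb0 _) ?_) ?_ <;>
    exact Finset.prod_nonneg fun j _ => by first | exact hτ0 _ _ _ _ | exact hσ0 _ _ _

lemma core_snoc (i : ℕ) (hi : i + 1 ≤ n) (σ : Fin (i+1) → X → Z → ℝ)
    (z' : Fin i → Z) (zl : Z) (x' : Fin (i+1) → X) (xl : X) :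
    core b τ (i+1) hi σ (Fin.snoc z' zl, Fin.snoc x' xl)
      = core b τ i (Nat.le_of_succ_le hi) (fun j => σ j.castSucc) (z', x')
          * (τ ⟨i, hi⟩ (x' (Fin.last i)) z' xl * σ (Fin.last i) xl zl) := by
  unfold core
  dsimp only
  rw [Fin.prod_univ_castSucc, Fin.prod_univ_castSucc
    (f := fun j : Fin (i+1) => σ j ((Fin.snoc x' xl : Fin (i+2) → X) j.succ)
      ((Fin.snoc z' zl : Fin (i+1) → Z) j))]
  have hb0 : (Fin.snoc x' xl : Fin (i+2) → X) 0 = x' 0 :=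
    snoc_eq_of_val _ _ _ _ (by simp)
  have hτj : ∀ j : Fin i,
      τ ((j.castSucc).castLE hi) ((Fin.snoc x' xl : Fin (i+2) → X) (j.castSucc).castSucc)
        (fun k => (Fin.snoc z' zl : Fin (i+1) → Z) (k.castLE (j.castSucc).isLt.le))
        ((Fin.snoc x' xl : Fin (i+2) → X) (j.castSucc).succ)
      = τ (j.castLE (Nat.le_of_succ_le hi)) (x' j.castSucc)
          (fun k => z' (k.castLE j.isLt.le)) (x' j.succ) := by
    intro j
    have e1 : (Fin.snoc x' xl : Fin (i+2) → X) (j.castSucc).castSucc = x' j.castSucc :=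
      Fin.snoc_castSucc _ _ _
    have e2 : (Fin.snoc x' xl : Fin (i+2) → X) (j.castSucc).succ = x' j.succ := by
      rw [Fin.succ_castSucc, Fin.snoc_castSucc]
    have hle : ((((j.castSucc : Fin (i+1)).castLE hi : Fin n)) : ℕ) ≤ i := by
      simp
    rw [e1, e2, snoc_comp_castLE z' zl _ hle]
    rfl
  have hτl :
      τ ((Fin.last i).castLE hi) ((Fin.snoc x' xl : Fin (i+2) → X) (Fin.last i).castSucc)
        (fun k => (Fin.snoc z' zl : Fin (i+1) → Z) (k.castLE (Fin.last i).isLt.le))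
        ((Fin.snoc x' xl : Fin (i+2) → X) (Fin.last i).succ)
      = τ ⟨i, hi⟩ (x' (Fin.last i)) z' xl := by
    have e1 : (Fin.snoc x' xl : Fin (i+2) → X) (Fin.last i).castSucc = x' (Fin.last i) :=
      Fin.snoc_castSucc _ _ _
    have e2 : (Fin.snoc x' xl : Fin (i+2) → X) (Fin.last i).succ = xl := by
      rw [Fin.succ_last, Fin.snoc_last]
    have hle : ((((Fin.last i : Fin (i+1)).castLE hi : Fin n)) : ℕ) ≤ i := by
      simp
    rw [e1, e2, snoc_comp_castLE z' zl _ hle]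
    rfl
  have hσj : ∀ j : Fin i,
      σ j.castSucc ((Fin.snoc x' xl : Fin (i+2) → X) (j.castSucc).succ)
        ((Fin.snoc z' zl : Fin (i+1) → Z) j.castSucc)
      = σ j.castSucc (x' j.succ) (z' j) := by
    intro j
    rw [Fin.succ_castSucc, Fin.snoc_castSucc, Fin.snoc_castSucc]
  have hσl : σ (Fin.last i) ((Fin.snoc x' xl : Fin (i+2) → X) (Fin.last i).succ)
        ((Fin.snoc z' zl : Fin (i+1) → Z) (Fin.last i))
      = σ (Fin.last i) xl zl := by
    rw [Fin.succ_last, Fin.snoc_last, Fin.snoc_last]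
  rw [hb0, hτl, hσl, Finset.prod_congr rfl (fun j _ => hτj j),
    Finset.prod_congr rfl (fun j _ => hσj j)]
  ring

variable (hb_meas : Measurable b) (hb0 : ∀ x, 0 ≤ b x) (hb_norm : ∫ x, b x ∂μX = 1)
variable (hτ_meas : ∀ j, Measurable fun t : X × (Fin j.val → Z) × X => τ j t.1 t.2.1 t.2.2)
variable (hτ0 : ∀ j x h x', 0 ≤ τ j x h x')
variable (hτ_norm : ∀ j x h, ∫ x', τ j x h x' ∂μX = 1)

include hb_meas hτ_meas hτ0 hτ_norm in
lemma peel (i : ℕ) (hi : i + 1 ≤ n) (hb0 : ∀ x, 0 ≤ b x)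
    (σ : Fin (i+1) → X → Z → ℝ)
    (hσ : ∀ j, Measurable fun t : X × Z => σ j t.1 t.2)
    (hσ0 : ∀ j x z, 0 ≤ σ j x z)
    (c : ℝ≥0∞) (hc : c ≠ ⊤)
    (htop : ∀ x, ∫⁻ zl, ENNReal.ofReal (σ (Fin.last i) x zl) ∂μZ = c) :
    lint μX μZ b τ (i+1) hi σ
      = c * lint μX μZ b τ i (Nat.le_of_succ_le hi) (fun j => σ j.castSucc) := by
  have hmc := meas_core b τ hb_meas hτ_meas (i+1) hi σ hσ
  have hmc' := meas_core b τ hb_meas hτ_meas i (Nat.le_of_succ_le hi)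
    (fun j => σ j.castSucc) (fun j => hσ j.castSucc)
  have hτ1 : ∀ (x : X) (h : Fin i → Z),
      ∫⁻ x', ENNReal.ofReal (τ ⟨i, hi⟩ x h x') ∂μX = 1 := fun x h =>
    lint_of_norm μX _ (fun x' => hτ0 _ _ _ _) (hτ_norm ⟨i, hi⟩ x h)
  unfold lint
  rw [lintegral_zx_snoc μX μZ i (fun p => ENNReal.ofReal (core b τ (i+1) hi σ p))
    hmc.ennreal_ofReal]
  have hpt : ∀ (z' : Fin i → Z) (x' : Fin (i+1) → X),
      (∫⁻ xl, ∫⁻ zl, ENNReal.ofReal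
          (core b τ (i+1) hi σ (Fin.snoc z' zl, Fin.snoc x' xl)) ∂μZ ∂μX)
        = ENNReal.ofReal (core b τ i (Nat.le_of_succ_le hi)
            (fun j => σ j.castSucc) (z', x')) * c := by
    intro z' x'
    have hsplit : ∀ xl zl, ENNReal.ofReal
          (core b τ (i+1) hi σ (Fin.snoc z' zl, Fin.snoc x' xl))
        = (ENNReal.ofReal (core b τ i (Nat.le_of_succ_le hi)
              (fun j => σ j.castSucc) (z', x'))
            * ENNReal.ofReal (τ ⟨i, hi⟩ (x' (Fin.last i)) z' xl))
          * ENNReal.ofReal (σ (Fin.last i) xl zl) := by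
      intro xl zl
      rw [core_snoc, ENNReal.ofReal_mul
        (core_nonneg b τ hb0 hτ0 _ _ _ (fun j => hσ0 j.castSucc) _),
        ENNReal.ofReal_mul (hτ0 _ _ _ _), mul_assoc]
    calc (∫⁻ xl, ∫⁻ zl, ENNReal.ofReal
          (core b τ (i+1) hi σ (Fin.snoc z' zl, Fin.snoc x' xl)) ∂μZ ∂μX)
        = ∫⁻ xl, (ENNReal.ofReal (core b τ i (Nat.le_of_succ_le hi)
              (fun j => σ j.castSucc) (z', x'))
            * ENNReal.ofReal (τ ⟨i, hi⟩ (x' (Fin.last i)) z' xl)) * c ∂μX := by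
          refine lintegral_congr fun xl => ?_
          rw [lintegral_congr (fun zl => hsplit xl zl),
            lintegral_const_mul' _ _
              (ENNReal.mul_ne_top ENNReal.ofReal_ne_top ENNReal.ofReal_ne_top),
            htop xl]
      _ = ∫⁻ xl, (ENNReal.ofReal (core b τ i (Nat.le_of_succ_le hi)
              (fun j => σ j.castSucc) (z', x')) * c)
            * ENNReal.ofReal (τ ⟨i, hi⟩ (x' (Fin.last i)) z' xl) ∂μX := by
          refine lintegral_congr fun xl => ?_
          ring
      _ = ENNReal.ofReal (core b τ i (Nat.le_of_succ_le hi)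
            (fun j => σ j.castSucc) (z', x')) * c := by
          rw [lintegral_const_mul' _ _
            (ENNReal.mul_ne_top ENNReal.ofReal_ne_top hc), hτ1, mul_one]
  rw [lintegral_congr (fun z' => lintegral_congr (fun x' => hpt z' x'))]
  rw [lintegral_congr (fun z' : Fin i → Z => by
    rw [lintegral_mul_const' c _ hc, mul_comm])]
  rw [lintegral_const_mul' c _ hc]

include hb_meas hb0 hb_norm hτ_meas hτ0 hτ_norm in
lemma lint_eq_prod (i : ℕ) (hi : i ≤ n)
    (σ : Fin i → X → Z → ℝ)
    (hσ : ∀ j, Measurable fun t : X × Z => σ j t.1 t.2)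
    (hσ0 : ∀ j x z, 0 ≤ σ j x z)
    (c : Fin i → ℝ≥0∞) (hct : ∀ j, c j ≠ ⊤)
    (hc : ∀ j x, ∫⁻ z, ENNReal.ofReal (σ j x z) ∂μZ = c j) :
    lint μX μZ b τ i hi σ = ∏ j, c j := by
  induction i with
  | zero =>
    unfold lint core
    simp only [Fin.prod_univ_zero, mul_one]
    have hinner : (∫⁻ x : Fin 1 → X, ENNReal.ofReal (b (x 0))
        ∂(Measure.pi fun _ => μX)) = 1 := by
      rw [lintegral_pi_snoc μX 0 (fun x => ENNReal.ofReal (b (x 0)))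
        ((hb_meas.comp (measurable_pi_apply 0)).ennreal_ofReal)]
      have : ∀ x' : Fin 0 → X, (∫⁻ a, ENNReal.ofReal
          (b ((Fin.snoc x' a : Fin 1 → X) 0)) ∂μX) = 1 := by
        intro x'
        have he : ∀ a : X, (Fin.snoc x' a : Fin 1 → X) 0 = a := fun a =>
          snoc_eq_last_of_val _ _ _ (by simp)
        rw [lintegral_congr (fun a => by rw [he a])]
        exact lint_of_norm μX b hb0 hb_norm
      rw [lintegral_congr this, lintegral_one, Measure.pi_univ]
      simp
    rw [lintegral_congr (fun z : Fin 0 → Z => hinner), lintegral_one, Measure.pi_univ]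
    simp
  | succ i ih =>
    rw [peel μX μZ b τ hb_meas hτ_meas hτ0 hτ_norm i hi hb0 σ hσ hσ0 (c (Fin.last i))
        (hct _) (fun x => hc (Fin.last i) x),
      ih (Nat.le_of_succ_le hi) (fun j => σ j.castSucc) (fun j => hσ j.castSucc)
        (fun j => hσ0 j.castSucc) (fun j => c j.castSucc) (fun j => hct j.castSucc)
        (fun j x => hc j.castSucc x),
      Fin.prod_univ_castSucc, mul_comm]

variable (pZ qZ : X → Z → ℝ)

def tele (i : ℕ) (l : ℕ) : Fin i → X → Z → ℝ := fun j x z =>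
  if (j : ℕ) < l then qZ x z else if (j : ℕ) = l then pZ x z - qZ x z else pZ x z

def teleabs (i : ℕ) (l : ℕ) : Fin i → X → Z → ℝ := fun j x z =>
  if (j : ℕ) < l then qZ x z else if (j : ℕ) = l then |pZ x z - qZ x z| else pZ x z

variable (hp_meas : Measurable (Function.uncurry pZ))
variable (hq_meas : Measurable (Function.uncurry qZ))
variable (hp0 : ∀ x z, 0 ≤ pZ x z) (hq0 : ∀ x z, 0 ≤ qZ x z)
variable (hp_norm : ∀ x, ∫ z, pZ x z ∂μZ = 1) (hq_norm : ∀ x, ∫ z, qZ x z ∂μZ = 1)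

include hp_meas hq_meas in
lemma meas_tele (i l : ℕ) (j : Fin i) :
    Measurable fun t : X × Z => tele pZ qZ i l j t.1 t.2 := by
  unfold tele
  split_ifs with h1 h2
  · exact hq_meas
  · exact hp_meas.sub hq_meas
  · exact hp_meas

include hp_meas hq_meas in
lemma meas_teleabs (i l : ℕ) (j : Fin i) :
    Measurable fun t : X × Z => teleabs pZ qZ i l j t.1 t.2 := by
  unfold teleabs
  split_ifs with h1 h2
  · exact hq_meas
  · exact (hp_meas.sub hq_meas).abs
  · exact hp_meas

include hp0 hq0 in
lemma nonneg_teleabs (i l : ℕ) (j : Fin i) (x : X) (z : Z) :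
    0 ≤ teleabs pZ qZ i l j x z := by
  unfold teleabs
  split_ifs with h1 h2
  · exact hq0 x z
  · exact abs_nonneg _
  · exact hp0 x z

include hb0 hτ0 hp0 hq0 in
lemma abs_core_tele (i : ℕ) (hi : i ≤ n) (l : ℕ) (p : (Fin i → Z) × (Fin (i+1) → X)) :
    |core b τ i hi (tele pZ qZ i l) p| = core b τ i hi (teleabs pZ qZ i l) p := by
  unfold core
  rw [abs_mul, abs_mul, abs_of_nonneg (hb0 _),
    abs_of_nonneg (Finset.prod_nonneg fun j _ => hτ0 _ _ _ _), Finset.abs_prod]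
  congr 1
  refine Finset.prod_congr rfl fun j _ => ?_
  unfold tele teleabs
  split_ifs with h1 h2
  · exact abs_of_nonneg (hq0 _ _)
  · rfl
  · exact abs_of_nonneg (hp0 _ _)

include hb_meas hb0 hb_norm hτ_meas hτ0 hτ_norm hp_meas hq_meas hp0 hq0 hp_norm in
lemma lint_teleabs_drop (l m : ℕ) : ∀ (h : l + 1 + m ≤ n),
    lint μX μZ b τ (l+1+m) h (teleabs pZ qZ (l+1+m) l)
      = lint μX μZ b τ (l+1) (by omega) (teleabs pZ qZ (l+1) l) := by
  induction m with
  | zero => intro h; rfl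
  | succ m ih =>
    intro h
    have htop : ∀ x : X, ∫⁻ zl, ENNReal.ofReal
        (teleabs pZ qZ (l+1+m+1) l (Fin.last (l+1+m)) x zl) ∂μZ = 1 := by
      intro x
      have he : ∀ zl, teleabs pZ qZ (l+1+m+1) l (Fin.last (l+1+m)) x zl = pZ x zl := by
        intro zl
        unfold teleabs
        rw [if_neg (by simp only [Fin.val_last]; omega),
          if_neg (by simp only [Fin.val_last]; omega)]
      rw [lintegral_congr fun zl => by rw [he zl]]
      exact lint_of_norm μZ _ (hp0 x) (hp_norm x)
    show lint μX μZ b τ ((l+1+m)+1) h (teleabs pZ qZ ((l+1+m)+1) l) = _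
    rw [peel μX μZ b τ hb_meas hτ_meas hτ0 hτ_norm (l+1+m) h hb0
        (teleabs pZ qZ (l+1+m+1) l)
        (meas_teleabs pZ qZ hp_meas hq_meas _ _)
        (nonneg_teleabs pZ qZ hp0 hq0 _ _) 1 one_ne_top htop, one_mul]
    exact ih (by omega)

lemma core_snoc_z (i : ℕ) (hi : i + 1 ≤ n) (σ : Fin (i+1) → X → Z → ℝ)
    (z' : Fin i → Z) (zl : Z) (x : Fin (i+2) → X) :
    core b τ (i+1) hi σ (Fin.snoc z' zl, x)
      = (b (x 0) *
          (∏ j : Fin (i+1), τ (j.castLE hi) (x j.castSucc)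
            (fun k => z' (k.castLE (Nat.lt_succ_iff.mp j.isLt))) (x j.succ)) *
          ∏ k : Fin i, σ k.castSucc (x k.succ.castSucc) (z' k))
        * σ (Fin.last i) (x (Fin.last (i+1))) zl := by
  unfold core
  dsimp only
  have hτ : ∀ j : Fin (i+1),
      τ (j.castLE hi) (x j.castSucc)
        (fun k => (Fin.snoc z' zl : Fin (i+1) → Z) (k.castLE j.isLt.le)) (x j.succ)
      = τ (j.castLE hi) (x j.castSucc)
          (fun k => z' (k.castLE (Nat.lt_succ_iff.mp j.isLt))) (x j.succ) := by
    intro j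
    rw [snoc_comp_castLE z' zl _
      (show (((j.castLE hi : Fin n)) : ℕ) ≤ i from Nat.lt_succ_iff.mp j.isLt)]
  have hσ : (∏ j : Fin (i+1), σ j (x j.succ) ((Fin.snoc z' zl : Fin (i+1) → Z) j))
      = (∏ k : Fin i, σ k.castSucc (x k.succ.castSucc) (z' k))
        * σ (Fin.last i) (x (Fin.last (i+1))) zl := by
    rw [Fin.prod_univ_castSucc]
    congr 1
    · refine Finset.prod_congr rfl fun k _ => ?_
      rw [Fin.snoc_castSucc, Fin.succ_castSucc]
    · rw [Fin.snoc_last, Fin.succ_last]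
  rw [Finset.prod_congr rfl (fun j _ => hτ j), hσ]
  ring

lemma integrable_of_integral_one {α : Type*} [MeasurableSpace α] (μ : Measure α)
    (g : α → ℝ) (hn : ∫ a, g a ∂μ = 1) : Integrable g μ := by
  by_contra h
  rw [integral_undef h] at hn
  norm_num at hn

include hp_norm hq_norm in
lemma lint_tv : ∀ x : X, ∫⁻ zl, ENNReal.ofReal (|pZ x zl - qZ x zl|) ∂μZ
    = ENNReal.ofReal (TVdisc μZ pZ qZ x) := by
  intro x
  have hip := integrable_of_integral_one μZ (pZ x) (hp_norm x)
  have hiq := integrable_of_integral_one μZ (qZ x) (hq_norm x)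
  have habs : Integrable (fun z => |pZ x z - qZ x z|) μZ := (hip.sub hiq).abs
  rw [← ofReal_integral_eq_lintegral_ofReal habs
    (Filter.Eventually.of_forall fun z => abs_nonneg _)]
  rfl

include hb_meas hb0 hτ_meas hτ0 hp_meas hq_meas hp0 hq0 hp_norm hq_norm in
lemma lint_to_D (l : Fin n) :
    lint μX μZ b τ (l.val + 1) l.isLt (teleabs pZ qZ (l.val + 1) l.val)
      = ∫⁻ z : Fin l.val → Z, ∫⁻ x : Fin (l.val + 2) → X, ENNReal.ofReal
          (b (x 0) * (∏ j : Fin (l.val + 1), τ (j.castLE l.isLt) (x j.castSucc)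
              (fun k => z (k.castLE (Nat.lt_succ_iff.mp j.isLt))) (x j.succ)) *
            (∏ k : Fin l.val, qZ (x k.succ.castSucc) (z k)) *
            TVdisc μZ pZ qZ (x (Fin.last (l.val + 1))))
          ∂(Measure.pi fun _ => μX) ∂(Measure.pi fun _ => μZ) := by
  have hmc := meas_core b τ hb_meas hτ_meas (l.val+1) l.isLt
    (teleabs pZ qZ (l.val+1) l.val) (meas_teleabs pZ qZ hp_meas hq_meas _ _)
  unfold lint
  rw [lint_z_snoc μX μZ l.val (l.val+2)
    (fun p => ENNReal.ofReal
      (core b τ (l.val+1) l.isLt (teleabs pZ qZ (l.val+1) l.val) p))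
    hmc.ennreal_ofReal]
  refine lintegral_congr fun z' => lintegral_congr fun x => ?_
  set K := b (x 0) * (∏ j : Fin (l.val + 1), τ (j.castLE l.isLt) (x j.castSucc)
      (fun k => z' (k.castLE (Nat.lt_succ_iff.mp j.isLt))) (x j.succ)) *
    ∏ k : Fin l.val, qZ (x k.succ.castSucc) (z' k) with hKdef
  have hK0 : 0 ≤ K := by
    rw [hKdef]
    exact mul_nonneg (mul_nonneg (hb0 _)
      (Finset.prod_nonneg fun j _ => hτ0 _ _ _ _))
      (Finset.prod_nonneg fun k _ => hq0 _ _)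
  have hsplit : ∀ zl, core b τ (l.val+1) l.isLt (teleabs pZ qZ (l.val+1) l.val)
        (Fin.snoc z' zl, x)
      = K * |pZ (x (Fin.last (l.val+1))) zl - qZ (x (Fin.last (l.val+1))) zl| := by
    intro zl
    rw [core_snoc_z b τ l.val l.isLt]
    congr 1
    · rw [hKdef]
      congr 1
      refine Finset.prod_congr rfl fun k _ => ?_
      show (if ((k.castSucc : Fin (l.val+1)) : ℕ) < l.val then _ else _) = _
      rw [if_pos (show ((k.castSucc : Fin (l.val+1)) : ℕ) < l.val from k.isLt)]
    · show (if ((Fin.last l.val) : ℕ) < l.val then _ else _) = _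
      rw [if_neg (by simp), if_pos (by simp)]
  rw [lintegral_congr fun zl => by rw [hsplit zl]]
  rw [lintegral_congr fun zl => ENNReal.ofReal_mul hK0]
  rw [lintegral_const_mul' _ _ ENNReal.ofReal_ne_top,
    lint_tv μZ pZ qZ hp_norm hq_norm _, ← ENNReal.ofReal_mul hK0]

def sigplus (i l : ℕ) : Fin i → X → Z → ℝ := fun j x z =>
  if (j : ℕ) < l then qZ x z else if (j : ℕ) = l then pZ x z + qZ x z else pZ x z

include hp_meas hq_meas in
lemma meas_sigplus (i l : ℕ) (j : Fin i) :
    Measurable fun t : X × Z => sigplus pZ qZ i l j t.1 t.2 := by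
  unfold sigplus
  split_ifs
  · exact hq_meas
  · exact hp_meas.add hq_meas
  · exact hp_meas

include hp0 hq0 in
lemma nonneg_sigplus (i l : ℕ) (j : Fin i) (x : X) (z : Z) :
    0 ≤ sigplus pZ qZ i l j x z := by
  unfold sigplus
  split_ifs
  · exact hq0 x z
  · exact add_nonneg (hp0 x z) (hq0 x z)
  · exact hp0 x z

include hp_meas hp0 hq0 hp_norm hq_norm in
lemma lint_sigplus_const (i l : ℕ) (j : Fin i) (x : X) :
    ∫⁻ z, ENNReal.ofReal (sigplus pZ qZ i l j x z) ∂μZ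
      = (if (j : ℕ) = l then 2 else 1) := by
  unfold sigplus
  by_cases h1 : (j : ℕ) < l
  · have hne : ¬((j : ℕ) = l) := by omega
    rw [lintegral_congr fun z => by rw [if_pos h1], if_neg hne]
    exact lint_of_norm μZ _ (hq0 x) (hq_norm x)
  · by_cases h2 : (j : ℕ) = l
    · rw [lintegral_congr fun z => by rw [if_neg h1, if_pos h2], if_pos h2]
      have hadd : ∀ z, ENNReal.ofReal (pZ x z + qZ x z)
          = ENNReal.ofReal (pZ x z) + ENNReal.ofReal (qZ x z) := fun z =>
        ENNReal.ofReal_add (hp0 x z) (hq0 x z)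
      rw [lintegral_congr hadd,
        lintegral_add_left (f := fun z => ENNReal.ofReal (pZ x z))
          ((hp_meas.comp measurable_prodMk_left).ennreal_ofReal),
        lint_of_norm μZ _ (hp0 x) (hp_norm x), lint_of_norm μZ _ (hq0 x) (hq_norm x)]
      norm_num
    · rw [lintegral_congr fun z => by rw [if_neg h1, if_neg h2], if_neg h2]
      exact lint_of_norm μZ _ (hp0 x) (hp_norm x)

include hp0 hq0 in
lemma teleabs_le_sigplus (i l : ℕ) (j : Fin i) (x : X) (z : Z) :
    teleabs pZ qZ i l j x z ≤ sigplus pZ qZ i l j x z := by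
  unfold teleabs sigplus
  split_ifs
  · exact le_refl _
  · exact (abs_sub _ _).trans
      (by rw [abs_of_nonneg (hp0 x z), abs_of_nonneg (hq0 x z)])
  · exact le_refl _

include hb_meas hb0 hb_norm hτ_meas hτ0 hτ_norm hp_meas hq_meas hp0 hq0 hp_norm hq_norm in
lemma lint_teleabs_ne_top (i l : ℕ) (hi : i ≤ n) :
    lint μX μZ b τ i hi (teleabs pZ qZ i l) ≠ ⊤ := by
  have hmono : lint μX μZ b τ i hi (teleabs pZ qZ i l)
      ≤ lint μX μZ b τ i hi (sigplus pZ qZ i l) := by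
    unfold lint
    refine lintegral_mono fun z => lintegral_mono fun x => ENNReal.ofReal_le_ofReal ?_
    unfold core
    refine mul_le_mul_of_nonneg_left ?_
      (mul_nonneg (hb0 _) (Finset.prod_nonneg fun j _ => hτ0 _ _ _ _))
    exact Finset.prod_le_prod (fun j _ => nonneg_teleabs pZ qZ hp0 hq0 _ _ _ _ _)
      (fun j _ => teleabs_le_sigplus pZ qZ hp0 hq0 _ _ _ _ _)
  refine ne_top_of_le_ne_top ?_ hmono
  rw [lint_eq_prod μX μZ b τ hb_meas hb0 hb_norm hτ_meas hτ0 hτ_norm i hi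
    (sigplus pZ qZ i l) (meas_sigplus pZ qZ hp_meas hq_meas i l)
    (nonneg_sigplus pZ qZ hp0 hq0 i l)
    (fun j => if (j : ℕ) = l then 2 else 1)
    (fun j => by show (if (j : ℕ) = l then (2:ℝ≥0∞) else 1) ≠ ⊤; split_ifs <;> simp)
    (fun j x => lint_sigplus_const μZ pZ qZ hp_meas hp0 hq0 hp_norm hq_norm i l j x)]
  exact ENNReal.prod_ne_top fun j _ => by
    show (if (j : ℕ) = l then (2:ℝ≥0∞) else 1) ≠ ⊤
    split_ifs <;> simp

include hb_meas hτ_meas in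
lemma lint_joint (i : ℕ) (hi : i ≤ n) (σ : Fin i → X → Z → ℝ)
    (hσ : ∀ j, Measurable fun t : X × Z => σ j t.1 t.2) :
    ∫⁻ p, ENNReal.ofReal (core b τ i hi σ p)
        ∂((Measure.pi fun _ : Fin i => μZ).prod (Measure.pi fun _ : Fin (i+1) => μX))
      = lint μX μZ b τ i hi σ := by
  rw [lintegral_prod _ ((meas_core b τ hb_meas hτ_meas i hi σ hσ).ennreal_ofReal.aemeasurable)]
  rfl

include hb_meas hτ_meas in
lemma integrable_core_mul (i : ℕ) (hi : i ≤ n) (σ σa : Fin i → X → Z → ℝ)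
    (hσ : ∀ j, Measurable fun t : X × Z => σ j t.1 t.2)
    (habs : ∀ p, |core b τ i hi σ p| ≤ core b τ i hi σa p)
    (hfin : lint μX μZ b τ i hi σa ≠ ⊤)
    (hσa : ∀ j, Measurable fun t : X × Z => σa j t.1 t.2)
    (g : (Fin i → Z) × (Fin (i+1) → X) → ℝ) (hg : Measurable g)
    (C : ℝ) (hC : 0 ≤ C) (hbd : ∀ p, |g p| ≤ C) :
    Integrable (fun p => core b τ i hi σ p * g p)
      ((Measure.pi fun _ : Fin i => μZ).prod (Measure.pi fun _ : Fin (i+1) => μX)) := by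
  refine integrable_of_norm_bound _ _ (fun p => C * core b τ i hi σa p)
    ((meas_core b τ hb_meas hτ_meas i hi σ hσ).mul hg).aestronglyMeasurable ?_ ?_
  · intro p
    rw [Real.norm_eq_abs, abs_mul]
    calc |core b τ i hi σ p| * |g p| ≤ core b τ i hi σa p * C :=
          mul_le_mul (habs p) (hbd p) (abs_nonneg _) ((abs_nonneg _).trans (habs p))
      _ = C * core b τ i hi σa p := mul_comm _ _
  · have hpt : ∀ p, ENNReal.ofReal (C * core b τ i hi σa p)
        = ENNReal.ofReal C * ENNReal.ofReal (core b τ i hi σa p) := fun p =>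
      ENNReal.ofReal_mul hC
    rw [lintegral_congr hpt, lintegral_const_mul' _ _ ENNReal.ofReal_ne_top,
      lint_joint μX μZ b τ hb_meas hτ_meas i hi σa hσa]
    exact ENNReal.mul_ne_top ENNReal.ofReal_ne_top hfin

include hb_meas hb0 hτ_meas hτ0 in
lemma integral_core_nonneg_eq (i : ℕ) (hi : i ≤ n) (σa : Fin i → X → Z → ℝ)
    (hσa : ∀ j, Measurable fun t : X × Z => σa j t.1 t.2)
    (hσa0 : ∀ j x z, 0 ≤ σa j x z) :
    ∫ p, core b τ i hi σa p
        ∂((Measure.pi fun _ : Fin i => μZ).prod (Measure.pi fun _ : Fin (i+1) => μX))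
      = (lint μX μZ b τ i hi σa).toReal := by
  rw [integral_eq_lintegral_of_nonneg_ae
    (Filter.Eventually.of_forall fun p => core_nonneg b τ hb0 hτ0 i hi σa hσa0 p)
    (meas_core b τ hb_meas hτ_meas i hi σa hσa).aestronglyMeasurable,
    lint_joint μX μZ b τ hb_meas hτ_meas i hi σa hσa]

include hb_meas hb0 hb_norm hτ_meas hτ0 hτ_norm hp_meas hq_meas hp0 hq0 hp_norm in
lemma lint_teleabs_drop' (lv i : ℕ) (hl : lv < i) (hi : i ≤ n) :
    lint μX μZ b τ i hi (teleabs pZ qZ i lv)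
      = lint μX μZ b τ (lv+1) (lt_of_lt_of_le hl hi) (teleabs pZ qZ (lv+1) lv) := by
  obtain ⟨m, rfl⟩ : ∃ m, i = lv + 1 + m := ⟨i - (lv+1), by omega⟩
  exact lint_teleabs_drop μX μZ b τ hb_meas hb0 hb_norm hτ_meas hτ0 hτ_norm
    pZ qZ hp_meas hq_meas hp0 hq0 hp_norm lv m hi

include hb_meas hτ_meas in
lemma eexp_joint (ρ : X → Z → ℝ) (i : ℕ) (hi : i ≤ n) (f : X → (Fin i → Z) → ℝ)
    (hint : Integrable (fun p => core b τ i hi (fun _ => ρ) p * f (p.2 (Fin.last i)) p.1)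
      ((Measure.pi fun _ : Fin i => μZ).prod (Measure.pi fun _ : Fin (i+1) => μX))) :
    Eexp μX μZ b τ ρ i hi f
      = ∫ p, core b τ i hi (fun _ => ρ) p * f (p.2 (Fin.last i)) p.1
          ∂((Measure.pi fun _ : Fin i => μZ).prod (Measure.pi fun _ : Fin (i+1) => μX)) := by
  have h := integral_prod (f := fun p : (Fin i → Z) × (Fin (i+1) → X) =>
    core b τ i hi (fun _ => ρ) p * f (p.2 (Fin.last i)) p.1) hint
  exact h.symm

lemma core_sub (i : ℕ) (hi : i ≤ n) (p : (Fin i → Z) × (Fin (i+1) → X)) :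
    core b τ i hi (fun _ => pZ) p - core b τ i hi (fun _ => qZ) p
      = ∑ l : Fin i, core b τ i hi (tele pZ qZ i l.val) p := by
  unfold core tele
  rw [← mul_sub, prod_sub_prod, Finset.mul_sum]

include hb_meas hb0 hb_norm hτ_meas hτ0 hτ_norm hp_meas hq_meas hp0 hq0 hp_norm hq_norm in
lemma dstep_eq (l : Fin n) :
    Dstep μX μZ b τ pZ qZ l
      = (lint μX μZ b τ (l.val+1) l.isLt (teleabs pZ qZ (l.val+1) l.val)).toReal := by
  have hTVmeas : Measurable (TVdisc μZ pZ qZ) := by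
    have h1 : StronglyMeasurable (Function.uncurry fun x z => |pZ x z - qZ x z|) :=
      ((hp_meas.sub hq_meas).abs).stronglyMeasurable
    exact h1.integral_prod_right.measurable
  have hTV0 : ∀ x, 0 ≤ TVdisc μZ pZ qZ x := fun x =>
    integral_nonneg fun z => abs_nonneg _
  set D : (Fin l.val → Z) × (Fin (l.val+2) → X) → ℝ := fun p =>
    b (p.2 0) * (∏ j : Fin (l.val+1), τ (j.castLE l.isLt) (p.2 j.castSucc)
      (fun k => p.1 (k.castLE (Nat.lt_succ_iff.mp j.isLt))) (p.2 j.succ)) *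
      (∏ k : Fin l.val, qZ (p.2 k.succ.castSucc) (p.1 k)) *
      TVdisc μZ pZ qZ (p.2 (Fin.last (l.val+1))) with hD
  have hDmeas : Measurable D := by
    have h0 : Measurable (fun p : (Fin l.val → Z) × (Fin (l.val+2) → X) => b (p.2 0)) :=
      hb_meas.comp ((measurable_pi_apply 0).comp measurable_snd)
    have h1 : Measurable (fun p : (Fin l.val → Z) × (Fin (l.val+2) → X) =>
        ∏ j : Fin (l.val+1), τ (j.castLE l.isLt) (p.2 j.castSucc)
          (fun k => p.1 (k.castLE (Nat.lt_succ_iff.mp j.isLt))) (p.2 j.succ)) := by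
      refine Finset.measurable_prod _ fun j _ => ?_
      have hmap : Measurable (fun p : (Fin l.val → Z) × (Fin (l.val+2) → X) =>
          ((p.2 j.castSucc, ((fun k => p.1 (k.castLE (Nat.lt_succ_iff.mp j.isLt))),
            p.2 j.succ)) : X × (Fin ((j.castLE l.isLt : Fin n)).val → Z) × X)) :=
        ((measurable_pi_apply _).comp measurable_snd).prodMk
          ((measurable_pi_lambda _ fun k => (measurable_pi_apply _).comp measurable_fst).prodMk
            ((measurable_pi_apply _).comp measurable_snd))
      exact (hτ_meas (j.castLE l.isLt)).comp hmap
    have h2 : Measurable (fun p : (Fin l.val → Z) × (Fin (l.val+2) → X) =>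
        ∏ k : Fin l.val, qZ (p.2 k.succ.castSucc) (p.1 k)) := by
      refine Finset.measurable_prod _ fun k _ => ?_
      have hmap : Measurable (fun p : (Fin l.val → Z) × (Fin (l.val+2) → X) =>
          ((p.2 k.succ.castSucc, p.1 k) : X × Z)) :=
        ((measurable_pi_apply _).comp measurable_snd).prodMk
          ((measurable_pi_apply _).comp measurable_fst)
      exact hq_meas.comp hmap
    have h3 : Measurable (fun p : (Fin l.val → Z) × (Fin (l.val+2) → X) =>
        TVdisc μZ pZ qZ (p.2 (Fin.last (l.val+1)))) :=
      hTVmeas.comp ((measurable_pi_apply _).comp measurable_snd)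
    exact ((h0.mul h1).mul h2).mul h3
  have hD0 : ∀ p, 0 ≤ D p := by
    intro p
    rw [hD]
    exact mul_nonneg (mul_nonneg (mul_nonneg (hb0 _)
      (Finset.prod_nonneg fun j _ => hτ0 _ _ _ _))
      (Finset.prod_nonneg fun k _ => hq0 _ _)) (hTV0 _)
  have hlD : ∫⁻ p, ENNReal.ofReal (D p)
      ∂((Measure.pi fun _ : Fin l.val => μZ).prod (Measure.pi fun _ : Fin (l.val+2) => μX))
      = lint μX μZ b τ (l.val+1) l.isLt (teleabs pZ qZ (l.val+1) l.val) := by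
    rw [lintegral_prod _ hDmeas.ennreal_ofReal.aemeasurable]
    exact (lint_to_D μX μZ b τ hb_meas hb0 hτ_meas hτ0 pZ qZ hp_meas hq_meas hp0 hq0
      hp_norm hq_norm l).symm
  have hfin := lint_teleabs_ne_top μX μZ b τ hb_meas hb0 hb_norm hτ_meas hτ0 hτ_norm
    pZ qZ hp_meas hq_meas hp0 hq0 hp_norm hq_norm (l.val+1) l.val l.isLt
  have hint : Integrable D
      ((Measure.pi fun _ : Fin l.val => μZ).prod (Measure.pi fun _ : Fin (l.val+2) => μX)) := by
    refine integrable_of_norm_bound _ _ D hDmeas.aestronglyMeasurable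
      (fun p => le_of_eq (Real.norm_of_nonneg (hD0 p))) ?_
    rw [hlD]
    exact hfin
  have h1 : Dstep μX μZ b τ pZ qZ l = ∫ p, D p
      ∂((Measure.pi fun _ : Fin l.val => μZ).prod (Measure.pi fun _ : Fin (l.val+2) => μX)) :=
    (integral_prod _ hint).symm
  rw [h1, integral_eq_lintegral_of_nonneg_ae (Filter.Eventually.of_forall hD0)
    hDmeas.aestronglyMeasurable, hlD]

include hb_meas hb0 hb_norm hτ_meas hτ0 hτ_norm hp_meas hq_meas hp0 hq0 hp_norm hq_norm in
lemma key (i : ℕ) (hi : i ≤ n) (f : X → (Fin i → Z) → ℝ)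
    (hf : Measurable fun t : X × (Fin i → Z) => f t.1 t.2)
    (C : ℝ) (hC : 0 ≤ C) (hbd : ∀ x z, |f x z| ≤ C) :
    |Eexp μX μZ b τ pZ i hi f - Eexp μX μZ b τ qZ i hi f|
      ≤ ∑ l ∈ Finset.univ.filter (fun l : Fin n => (l : ℕ) < i),
          C * Dstep μX μZ b τ pZ qZ l := by
  set M := (Measure.pi fun _ : Fin i => μZ).prod (Measure.pi fun _ : Fin (i+1) => μX) with hM
  set g := fun p : (Fin i → Z) × (Fin (i+1) → X) => f (p.2 (Fin.last i)) p.1 with hg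
  have hmapg : Measurable (fun p : (Fin i → Z) × (Fin (i+1) → X) =>
      ((p.2 (Fin.last i), p.1) : X × (Fin i → Z))) :=
    ((measurable_pi_apply _).comp measurable_snd).prodMk measurable_fst
  have hgmeas : Measurable g := hf.comp hmapg
  have hgbd : ∀ p, |g p| ≤ C := fun p => hbd _ _
  have hfin_p : lint μX μZ b τ i hi (fun _ => pZ) ≠ ⊤ := by
    rw [lint_eq_prod μX μZ b τ hb_meas hb0 hb_norm hτ_meas hτ0 hτ_norm i hi
      (fun _ => pZ) (fun j => hp_meas) (fun j => hp0) (fun _ => 1) (fun j => one_ne_top)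
      (fun j x => lint_of_norm μZ _ (hp0 x) (hp_norm x))]
    simp
  have hfin_q : lint μX μZ b τ i hi (fun _ => qZ) ≠ ⊤ := by
    rw [lint_eq_prod μX μZ b τ hb_meas hb0 hb_norm hτ_meas hτ0 hτ_norm i hi
      (fun _ => qZ) (fun j => hq_meas) (fun j => hq0) (fun _ => 1) (fun j => one_ne_top)
      (fun j x => lint_of_norm μZ _ (hq0 x) (hq_norm x))]
    simp
  have hip : Integrable (fun p => core b τ i hi (fun _ => pZ) p * g p) M :=
    integrable_core_mul μX μZ b τ hb_meas hτ_meas i hi _ _ (fun j => hp_meas)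
      (fun p => le_of_eq (abs_of_nonneg
        (core_nonneg b τ hb0 hτ0 i hi _ (fun j x z => hp0 x z) p)))
      hfin_p (fun j => hp_meas) g hgmeas C hC hgbd
  have hiq : Integrable (fun p => core b τ i hi (fun _ => qZ) p * g p) M :=
    integrable_core_mul μX μZ b τ hb_meas hτ_meas i hi _ _ (fun j => hq_meas)
      (fun p => le_of_eq (abs_of_nonneg
        (core_nonneg b τ hb0 hτ0 i hi _ (fun j x z => hq0 x z) p)))
      hfin_q (fun j => hq_meas) g hgmeas C hC hgbd
  have hfin_t : ∀ l : Fin i, lint μX μZ b τ i hi (teleabs pZ qZ i l.val) ≠ ⊤ := fun l =>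
    lint_teleabs_ne_top μX μZ b τ hb_meas hb0 hb_norm hτ_meas hτ0 hτ_norm
      pZ qZ hp_meas hq_meas hp0 hq0 hp_norm hq_norm i l.val hi
  have hit : ∀ l : Fin i,
      Integrable (fun p => core b τ i hi (tele pZ qZ i l.val) p * g p) M := fun l =>
    integrable_core_mul μX μZ b τ hb_meas hτ_meas i hi _ _
      (meas_tele pZ qZ hp_meas hq_meas i l.val)
      (fun p => le_of_eq (abs_core_tele b τ hb0 hτ0 pZ qZ hp0 hq0 i hi l.val p))
      (hfin_t l) (meas_teleabs pZ qZ hp_meas hq_meas i l.val) g hgmeas C hC hgbd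
  rw [eexp_joint μX μZ b τ hb_meas hτ_meas pZ i hi f hip,
    eexp_joint μX μZ b τ hb_meas hτ_meas qZ i hi f hiq,
    ← integral_sub hip hiq]
  have hpt : ∀ p, core b τ i hi (fun _ => pZ) p * g p - core b τ i hi (fun _ => qZ) p * g p
      = ∑ l : Fin i, core b τ i hi (tele pZ qZ i l.val) p * g p := by
    intro p
    rw [← sub_mul, core_sub b τ pZ qZ i hi p, Finset.sum_mul]
  rw [integral_congr_ae (Filter.Eventually.of_forall hpt),
    integral_finset_sum _ (fun l _ => hit l)]
  have hbnd : ∀ l : Fin i,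
      |∫ p, core b τ i hi (tele pZ qZ i l.val) p * g p ∂M|
        ≤ C * Dstep μX μZ b τ pZ qZ ⟨l.val, lt_of_lt_of_le l.isLt hi⟩ := by
    intro l
    have h1 : Integrable (fun p => core b τ i hi (teleabs pZ qZ i l.val) p) M := by
      have h2 := integrable_core_mul μX μZ b τ hb_meas hτ_meas i hi _ _
        (meas_teleabs pZ qZ hp_meas hq_meas i l.val)
        (fun p => le_of_eq (abs_of_nonneg (core_nonneg b τ hb0 hτ0 i hi _
          (nonneg_teleabs pZ qZ hp0 hq0 i l.val) p)))
        (hfin_t l) (meas_teleabs pZ qZ hp_meas hq_meas i l.val)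
        (fun _ => (1:ℝ)) measurable_const 1 zero_le_one (fun p => by norm_num)
      simpa using h2
    have h1' : Integrable (fun p => C * core b τ i hi (teleabs pZ qZ i l.val) p) M :=
      h1.const_mul C
    have habs : |∫ p, core b τ i hi (tele pZ qZ i l.val) p * g p ∂M|
        ≤ ∫ p, C * core b τ i hi (teleabs pZ qZ i l.val) p ∂M := by
      rw [← Real.norm_eq_abs]
      refine norm_integral_le_of_norm_le h1' (Filter.Eventually.of_forall fun p => ?_)
      rw [Real.norm_eq_abs, abs_mul, abs_core_tele b τ hb0 hτ0 pZ qZ hp0 hq0 i hi l.val p]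
      calc core b τ i hi (teleabs pZ qZ i l.val) p * |g p|
          ≤ core b τ i hi (teleabs pZ qZ i l.val) p * C :=
            mul_le_mul_of_nonneg_left (hgbd p)
              (core_nonneg b τ hb0 hτ0 i hi _ (nonneg_teleabs pZ qZ hp0 hq0 i l.val) p)
        _ = C * core b τ i hi (teleabs pZ qZ i l.val) p := mul_comm _ _
    refine habs.trans ?_
    rw [integral_const_mul, integral_core_nonneg_eq μX μZ b τ hb_meas hb0 hτ_meas hτ0 i hi _
      (meas_teleabs pZ qZ hp_meas hq_meas i l.val) (nonneg_teleabs pZ qZ hp0 hq0 i l.val)]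
    have hdrop := lint_teleabs_drop' μX μZ b τ hb_meas hb0 hb_norm hτ_meas hτ0 hτ_norm
      pZ qZ hp_meas hq_meas hp0 hq0 hp_norm l.val i l.isLt hi
    rw [hdrop, ← dstep_eq μX μZ b τ hb_meas hb0 hb_norm hτ_meas hτ0 hτ_norm
      pZ qZ hp_meas hq_meas hp0 hq0 hp_norm hq_norm ⟨l.val, lt_of_lt_of_le l.isLt hi⟩]
  calc |∑ l : Fin i, ∫ p, core b τ i hi (tele pZ qZ i l.val) p * g p ∂M|
      ≤ ∑ l : Fin i, |∫ p, core b τ i hi (tele pZ qZ i l.val) p * g p ∂M| :=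
        Finset.abs_sum_le_sum_abs _ _
    _ ≤ ∑ l : Fin i, C * Dstep μX μZ b τ pZ qZ ⟨l.val, lt_of_lt_of_le l.isLt hi⟩ :=
        Finset.sum_le_sum fun l _ => hbnd l
    _ = ∑ l ∈ Finset.univ.filter (fun l : Fin n => (l : ℕ) < i),
          C * Dstep μX μZ b τ pZ qZ l := by
        refine Finset.sum_bij (fun (l : Fin i) _ => (⟨l.val, lt_of_lt_of_le l.isLt hi⟩ : Fin n))
          ?_ ?_ ?_ ?_
        · intro a _
          simp only [Finset.mem_filter, Finset.mem_univ, true_and]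
          exact a.isLt
        · intro a1 _ a2 _ h
          ext
          simpa [Fin.ext_iff] using h
        · intro b hb
          simp only [Finset.mem_filter, Finset.mem_univ, true_and] at hb
          exact ⟨⟨b.val, hb⟩, Finset.mem_univ _, by ext; rfl⟩
        · intro a _
          rfl

end Main
end VDA

/-- Corollary 1 of the paper (the value-function bound): the difference between
the values `V^ρ = ∑_{i=0}^n γ^i E_ρ^{(i)}[r_i]` under the original and
simplified observation models is bounded by `∑_{i=1}^n W_i D_i`, where
`W_i = ∑_{l=i}^n γ^l R_l`. -/
theorem value_diff_le_weighted_sum_discrepancy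
    {X Z : Type*} [MeasurableSpace X] [MeasurableSpace Z]
    (μX : Measure X) (μZ : Measure Z) [SigmaFinite μX] [SigmaFinite μZ]
    (n : ℕ)
    (b : X → ℝ) (hb_meas : Measurable b) (hb_nonneg : ∀ x, 0 ≤ b x)
    (hb_norm : ∫ x, b x ∂μX = 1)
    (τ : (j : Fin n) → X → (Fin j.val → Z) → X → ℝ)
    (hτ_meas : ∀ j, Measurable fun t : X × (Fin j.val → Z) × X => τ j t.1 t.2.1 t.2.2)
    (hτ_nonneg : ∀ j x h x', 0 ≤ τ j x h x')
    (hτ_norm : ∀ j x h, ∫ x', τ j x h x' ∂μX = 1)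
    (pZ qZ : X → Z → ℝ)
    (hp_meas : Measurable (Function.uncurry pZ))
    (hq_meas : Measurable (Function.uncurry qZ))
    (hp_nonneg : ∀ x z, 0 ≤ pZ x z) (hq_nonneg : ∀ x z, 0 ≤ qZ x z)
    (hp_norm : ∀ x, ∫ z, pZ x z ∂μZ = 1) (hq_norm : ∀ x, ∫ z, qZ x z ∂μZ = 1)
    (γ : ℝ) (hγ0 : 0 < γ) (hγ1 : γ ≤ 1)
    (r : (i : Fin (n + 1)) → X → (Fin i.val → Z) → ℝ)
    (hr_meas : ∀ i, Measurable fun t : X × (Fin i.val → Z) => r i t.1 t.2)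
    (R : Fin (n + 1) → ℝ) (hR : ∀ i, 0 ≤ R i)
    (hr_bdd : ∀ i x z, |r i x z| ≤ R i) :
    |(∑ i : Fin (n + 1),
        γ ^ i.val *
          Eexp μX μZ b τ pZ i.val (Nat.lt_succ_iff.mp i.isLt) (r i)) -
      ∑ i : Fin (n + 1),
        γ ^ i.val *
          Eexp μX μZ b τ qZ i.val (Nat.lt_succ_iff.mp i.isLt) (r i)|
      ≤ ∑ i : Fin n,
          (∑ l ∈ Finset.univ.filter fun l : Fin (n + 1) => i.val + 1 ≤ l.val,
              γ ^ l.val * R l) *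
            Dstep μX μZ b τ pZ qZ i := by
  have hkey : ∀ i : Fin (n+1),
      |Eexp μX μZ b τ pZ i.val (Nat.lt_succ_iff.mp i.isLt) (r i)
        - Eexp μX μZ b τ qZ i.val (Nat.lt_succ_iff.mp i.isLt) (r i)|
      ≤ ∑ l ∈ Finset.univ.filter (fun l : Fin n => (l : ℕ) < i.val),
          R i * Dstep μX μZ b τ pZ qZ l := fun i =>
    VDA.key μX μZ b τ hb_meas hb_nonneg hb_norm hτ_meas hτ_nonneg hτ_norm
      pZ qZ hp_meas hq_meas hp_nonneg hq_nonneg hp_norm hq_norm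
      i.val (Nat.lt_succ_iff.mp i.isLt) (r i) (hr_meas i) (R i) (hR i) (hr_bdd i)
  have hγpow : ∀ k : ℕ, (0:ℝ) ≤ γ ^ k := fun k => pow_nonneg hγ0.le k
  calc |(∑ i : Fin (n + 1), γ ^ i.val *
          Eexp μX μZ b τ pZ i.val (Nat.lt_succ_iff.mp i.isLt) (r i)) -
        ∑ i : Fin (n + 1), γ ^ i.val *
          Eexp μX μZ b τ qZ i.val (Nat.lt_succ_iff.mp i.isLt) (r i)|
      = |∑ i : Fin (n + 1), (γ ^ i.val *
            Eexp μX μZ b τ pZ i.val (Nat.lt_succ_iff.mp i.isLt) (r i)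
          - γ ^ i.val *
            Eexp μX μZ b τ qZ i.val (Nat.lt_succ_iff.mp i.isLt) (r i))| := by
        rw [Finset.sum_sub_distrib]
    _ ≤ ∑ i : Fin (n + 1), |γ ^ i.val *
            Eexp μX μZ b τ pZ i.val (Nat.lt_succ_iff.mp i.isLt) (r i)
          - γ ^ i.val *
            Eexp μX μZ b τ qZ i.val (Nat.lt_succ_iff.mp i.isLt) (r i)| :=
        Finset.abs_sum_le_sum_abs _ _
    _ = ∑ i : Fin (n + 1), γ ^ i.val *
          |Eexp μX μZ b τ pZ i.val (Nat.lt_succ_iff.mp i.isLt) (r i)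
            - Eexp μX μZ b τ qZ i.val (Nat.lt_succ_iff.mp i.isLt) (r i)| := by
        refine Finset.sum_congr rfl fun i _ => ?_
        rw [← mul_sub, abs_mul, abs_of_nonneg (hγpow i.val)]
    _ ≤ ∑ i : Fin (n + 1), γ ^ i.val *
          ∑ l ∈ Finset.univ.filter (fun l : Fin n => (l : ℕ) < i.val),
            R i * Dstep μX μZ b τ pZ qZ l :=
        Finset.sum_le_sum fun i _ => mul_le_mul_of_nonneg_left (hkey i) (hγpow i.val)
    _ = ∑ i : Fin (n + 1),
          ∑ l ∈ Finset.univ.filter (fun l : Fin n => (l : ℕ) < i.val),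
            γ ^ i.val * R i * Dstep μX μZ b τ pZ qZ l := by
        refine Finset.sum_congr rfl fun i _ => ?_
        rw [Finset.mul_sum]
        exact Finset.sum_congr rfl fun l _ => by ring
    _ = ∑ i : Fin (n + 1), ∑ l : Fin n,
          if (l : ℕ) < i.val then γ ^ i.val * R i * Dstep μX μZ b τ pZ qZ l else 0 := by
        exact Finset.sum_congr rfl fun i _ => Finset.sum_filter _ _
    _ = ∑ l : Fin n, ∑ i : Fin (n + 1),
          if (l : ℕ) < i.val then γ ^ i.val * R i * Dstep μX μZ b τ pZ qZ l else 0 :=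
        Finset.sum_comm
    _ = ∑ i : Fin n,
          (∑ l ∈ Finset.univ.filter fun l : Fin (n + 1) => i.val + 1 ≤ l.val,
              γ ^ l.val * R l) *
            Dstep μX μZ b τ pZ qZ i := by
        refine Finset.sum_congr rfl fun l _ => ?_
        rw [Finset.sum_mul]
        rw [Finset.sum_filter]
        refine Finset.sum_congr rfl fun i _ => ?_
        split_ifs with h1 h2 <;> first | rfl | omega

end
end
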